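/- arXiv:1307.4953 — 12 statements merged into one kernel-verified Lean document; each statement's English description precedes it below -/
import Mathlib

section
/- For all t ≥ 0 and all x₁,…,x₅ ≥ 0, the inequality t⁵ ≤ x₁x₂x₃x₄x₅ holds if and only if there exist u₁,…,u₅ ≥ 0 satisfying the six rotated second order cone inequalities u₁² ≤ x₁x₂, u₂² ≤ x₃x₄, u₃² ≤ x₅t, u₄² ≤ u₁u₂, u₅² ≤ u₃t, and t² ≤ u₄u₅. -/
/-- SOC representation of the inequality `t⁵ ≤ x₁x₂x₃x₄x₅` over nonnegative reals. -/
theorem stmt_1 (t x₁ x₂ x₃ x₄ x₅ : ℝ) (ht : 0 ≤ t)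
    (h₁ : 0 ≤ x₁) (h₂ : 0 ≤ x₂) (h₃ : 0 ≤ x₃) (h₄ : 0 ≤ x₄) (h₅ : 0 ≤ x₅) :
    t ^ 5 ≤ x₁ * x₂ * x₃ * x₄ * x₅ ↔
      ∃ u₁ u₂ u₃ u₄ u₅ : ℝ,
        0 ≤ u₁ ∧ 0 ≤ u₂ ∧ 0 ≤ u₃ ∧ 0 ≤ u₄ ∧ 0 ≤ u₅ ∧
        u₁ ^ 2 ≤ x₁ * x₂ ∧ u₂ ^ 2 ≤ x₃ * x₄ ∧ u₃ ^ 2 ≤ x₅ * t ∧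
        u₄ ^ 2 ≤ u₁ * u₂ ∧ u₅ ^ 2 ≤ u₃ * t ∧ t ^ 2 ≤ u₄ * u₅ := by
  constructor
  · intro h
    set a := Real.sqrt (x₁ * x₂) with ha
    set b := Real.sqrt (x₃ * x₄) with hb
    set c := Real.sqrt (x₅ * t) with hc
    set d := Real.sqrt (a * b) with hd
    set e := Real.sqrt (c * t) with he
    have ha0 : 0 ≤ a := Real.sqrt_nonneg _
    have hb0 : 0 ≤ b := Real.sqrt_nonneg _
    have hc0 : 0 ≤ c := Real.sqrt_nonneg _
    have hd0 : 0 ≤ d := Real.sqrt_nonneg _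
    have he0 : 0 ≤ e := Real.sqrt_nonneg _
    have ha2 : a ^ 2 = x₁ * x₂ := Real.sq_sqrt (by positivity)
    have hb2 : b ^ 2 = x₃ * x₄ := Real.sq_sqrt (by positivity)
    have hc2 : c ^ 2 = x₅ * t := Real.sq_sqrt (by positivity)
    have hd2 : d ^ 2 = a * b := Real.sq_sqrt (by positivity)
    have he2 : e ^ 2 = c * t := Real.sq_sqrt (by positivity)
    refine ⟨a, b, c, d, e, ha0, hb0, hc0, hd0, he0, ha2.le, hb2.le, hc2.le, hd2.le, he2.le, ?_⟩
    have key : (t ^ 2) ^ 4 ≤ (d * e) ^ 4 := by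
      have : (d * e) ^ 4 = x₁ * x₂ * x₃ * x₄ * x₅ * t ^ 3 := by
        have : (d * e) ^ 4 = (d ^ 2) ^ 2 * (e ^ 2) ^ 2 := by ring
        rw [this, hd2, he2]
        have : (a * b) ^ 2 = a ^ 2 * b ^ 2 := by ring
        rw [show (a * b) ^ 2 * (c * t) ^ 2 = a ^ 2 * b ^ 2 * c ^ 2 * t ^ 2 by ring,
          ha2, hb2, hc2]
        ring
      rw [this]
      nlinarith [pow_nonneg ht 3, mul_nonneg (mul_nonneg (mul_nonneg (mul_nonneg h₁ h₂) h₃) h₄) h₅]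
    exact le_of_pow_le_pow_left₀ (by norm_num) (mul_nonneg hd0 he0) key
  · rintro ⟨u₁, u₂, u₃, u₄, u₅, n₁, n₂, n₃, n₄, n₅, q₁, q₂, q₃, q₄, q₅, q₆⟩
    rcases eq_or_lt_of_le ht with h0 | h0
    · rw [← h0]; norm_num; positivity
    · have key : t ^ 8 ≤ x₁ * x₂ * x₃ * x₄ * x₅ * t ^ 3 := by
        have e1 : (t ^ 2) ^ 4 ≤ (u₄ * u₅) ^ 4 :=
          pow_le_pow_left₀ (sq_nonneg t) q₆ 4
        have e2 : (u₄ * u₅) ^ 4 = (u₄ ^ 2) ^ 2 * (u₅ ^ 2) ^ 2 := by ring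
        have e3 : (u₄ ^ 2) ^ 2 ≤ (u₁ * u₂) ^ 2 := pow_le_pow_left₀ (by positivity) q₄ 2
        have e4 : (u₅ ^ 2) ^ 2 ≤ (u₃ * t) ^ 2 := pow_le_pow_left₀ (by positivity) q₅ 2
        have e5 : (u₁ * u₂) ^ 2 * (u₃ * t) ^ 2 = u₁ ^ 2 * u₂ ^ 2 * (u₃ ^ 2 * t ^ 2) := by ring
        have e6 : u₁ ^ 2 * u₂ ^ 2 ≤ (x₁ * x₂) * (x₃ * x₄) :=
          mul_le_mul q₁ q₂ (by positivity) (by positivity)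
        have e7 : u₃ ^ 2 * t ^ 2 ≤ (x₅ * t) * t ^ 2 :=
          mul_le_mul_of_nonneg_right q₃ (by positivity)
        calc t ^ 8 = (t ^ 2) ^ 4 := by ring
          _ ≤ (u₄ * u₅) ^ 4 := e1
          _ = (u₄ ^ 2) ^ 2 * (u₅ ^ 2) ^ 2 := e2
          _ ≤ (u₁ * u₂) ^ 2 * (u₃ * t) ^ 2 :=
            mul_le_mul e3 e4 (by positivity) (by positivity)
          _ = u₁ ^ 2 * u₂ ^ 2 * (u₃ ^ 2 * t ^ 2) := e5
          _ ≤ (x₁ * x₂) * (x₃ * x₄) * ((x₅ * t) * t ^ 2) :=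
            mul_le_mul e6 e7 (by positivity) (by positivity)
          _ = x₁ * x₂ * x₃ * x₄ * x₅ * t ^ 3 := by ring
      have ht3 : 0 < t ^ 3 := by positivity
      have := (mul_le_mul_iff_of_pos_right ht3).mp (by linarith [key] : t ^ 5 * t ^ 3 ≤ (x₁ * x₂ * x₃ * x₄ * x₅) * t ^ 3)
      exact this
end

section
/- For every positive integer n, the hypograph of the geometric mean, namely the set S = {(x,t) ∈ ℝⁿ × ℝ : xᵢ ≥ 0 for all i, and t ≤ (x₁·x₂·…·xₙ)^{1/n}}, is SOC-representable. -/
open Matrix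

/-- A set `S ⊆ ℝᵈ` is second order cone representable if it is the projection of a set
in a higher dimensional space described by finitely many second order cone inequalities
`‖Gᵢ(z,y) + hᵢ‖ ≤ cᵢᵀ(z,y) + dᵢ`. -/
def SOCRep {d : ℕ} (S : Set (Fin d → ℝ)) : Prop :=
  ∃ (p N : ℕ), 0 < N ∧
    ∃ (r : Fin N → ℕ)
      (G : (i : Fin N) → Matrix (Fin (r i)) (Fin (d + p)) ℝ)
      (h : (i : Fin N) → Fin (r i) → ℝ)
      (c : Fin N → Fin (d + p) → ℝ)
      (δ : Fin N → ℝ),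
      ∀ z : Fin d → ℝ,
        z ∈ S ↔ ∃ y : Fin p → ℝ,
          ∀ i : Fin N,
            Real.sqrt (∑ j, ((G i *ᵥ Fin.append z y) j + h i j) ^ 2) ≤
              (∑ j, c i j * Fin.append z y j) + δ i

inductive Constr (m : ℕ) where
  | lin (c : Fin m → ℝ) : Constr m
  | hyp (u a b : Fin m → ℝ) : Constr m

def Constr.holds {m : ℕ} (v : Fin m → ℝ) : Constr m → Prop
  | .lin c => 0 ≤ ∑ j, c j * v j
  | .hyp u a b => 0 ≤ (∑ j, a j * v j) + (∑ j, b j * v j) ∧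
      (∑ j, u j * v j) ^ 2 ≤ (∑ j, a j * v j) * (∑ j, b j * v j)

def Constr.rank {m : ℕ} : Constr m → ℕ
  | .lin _ => 0
  | .hyp _ _ _ => 2

def Constr.G {m : ℕ} : (C : Constr m) → Matrix (Fin C.rank) (Fin m) ℝ
  | .lin _ => fun i => i.elim0
  | .hyp u a b => Matrix.of ![fun j => 2 * u j, fun j => a j - b j]

def Constr.c {m : ℕ} : Constr m → (Fin m → ℝ)
  | .lin c => c
  | .hyp _ a b => fun j => a j + b j

lemma Constr.soc_iff {m : ℕ} (C : Constr m) (v : Fin m → ℝ) :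
    Real.sqrt (∑ j, ((C.G *ᵥ v) j + 0) ^ 2) ≤ (∑ j, C.c j * v j) + 0 ↔ C.holds v := by
  cases C with
  | lin c =>
    have h0 : (∑ j : Fin (Constr.rank (Constr.lin c)),
        (((Constr.lin c).G *ᵥ v) j + 0) ^ 2) = 0 := by
      apply Finset.sum_eq_zero
      intro i _
      exact absurd i.isLt (by simp [Constr.rank])
    rw [h0, Real.sqrt_zero, add_zero]
    rfl
  | hyp u a b =>
    set U := ∑ j, u j * v j with hU
    set A := ∑ j, a j * v j with hA
    set B := ∑ j, b j * v j with hB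
    have h0 : (∑ j : Fin (Constr.rank (Constr.hyp u a b)),
        (((Constr.hyp u a b).G *ᵥ v) j + 0) ^ 2) = (2*U)^2 + (A-B)^2 := by
      show (∑ j : Fin 2,
        ((Matrix.of ![fun j => 2 * u j, fun j => a j - b j] *ᵥ v) j + 0) ^ 2) = _
      rw [Fin.sum_univ_two]
      simp only [Matrix.mulVec, dotProduct]
      simp [Finset.mul_sum, Finset.sum_sub_distrib, sub_mul, mul_assoc, hU, hA, hB]
    have hc : (∑ j, (Constr.hyp u a b).c j * v j) = A + B := by
      simp [Constr.c, Finset.sum_add_distrib, add_mul, hA, hB]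
    rw [h0, hc, add_zero]
    constructor
    · intro h
      have hAB : 0 ≤ A + B := le_trans (Real.sqrt_nonneg _) h
      have h2 : (2*U)^2 + (A-B)^2 ≤ (A+B)^2 := by
        have := Real.sq_sqrt (by positivity : (0:ℝ) ≤ (2*U)^2 + (A-B)^2)
        nlinarith [Real.sqrt_nonneg ((2*U)^2 + (A-B)^2)]
      refine ⟨hAB, by nlinarith⟩
    · rintro ⟨hAB, hle⟩
      have h2 : (2*U)^2 + (A-B)^2 ≤ (A+B)^2 := by nlinarith
      calc Real.sqrt ((2*U)^2 + (A-B)^2) ≤ Real.sqrt ((A+B)^2) := Real.sqrt_le_sqrt h2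
        _ = |A+B| := Real.sqrt_sq_eq_abs _
        _ = A + B := abs_of_nonneg hAB

lemma socRep_of_constraints {d p N : ℕ} (hN : 0 < N) (S : Set (Fin d → ℝ))
    (C : Fin N → Constr (d + p))
    (hS : ∀ z, z ∈ S ↔ ∃ y : Fin p → ℝ, ∀ i, (C i).holds (Fin.append z y)) :
    SOCRep S := by
  refine ⟨p, N, hN, fun i => (C i).rank, fun i => (C i).G, fun i => 0, fun i => (C i).c,
    fun i => 0, fun z => ?_⟩
  rw [hS z]
  refine exists_congr fun y => forall_congr' fun i => ?_
  exact ((C i).soc_iff (Fin.append z y)).symm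

/-- coordinate functional -/
def ee (D i : ℕ) : Fin D → ℝ := fun j => if (j : ℕ) = i then 1 else 0

lemma lval_ee {D : ℕ} (v : Fin D → ℝ) (i : ℕ) (h : i < D) :
    ∑ j, ee D i j * v j = v ⟨i, h⟩ := by
  rw [Finset.sum_eq_single_of_mem ⟨i, h⟩ (Finset.mem_univ _)]
  · simp [ee]
  · intro b _ hb
    have : (b : ℕ) ≠ i := fun e => hb (Fin.ext e)
    simp [ee, this]

lemma append_left' {a b : ℕ} (z : Fin a → ℝ) (y : Fin b → ℝ) (i : ℕ) (h : i < a)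
    (h2 : i < a + b) : Fin.append z y ⟨i, h2⟩ = z ⟨i, h⟩ :=
  Fin.append_left z y ⟨i, h⟩

lemma append_right' {a b : ℕ} (z : Fin a → ℝ) (y : Fin b → ℝ) (j : ℕ) (hj : j < b)
    (h2 : a + j < a + b) : Fin.append z y ⟨a + j, h2⟩ = y ⟨j, hj⟩ :=
  Fin.append_right z y ⟨j, hj⟩

/-- product split over a binary subdivision -/
lemma prodsplit (f : ℕ → ℝ) (l j : ℕ) :
    ∏ i ∈ Finset.range (2^(l+1)), f (j*2^(l+1) + i) =
      (∏ i ∈ Finset.range (2^l), f ((2*j)*2^l + i)) *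
        (∏ i ∈ Finset.range (2^l), f ((2*j+1)*2^l + i)) := by
  rw [show (2:ℕ)^(l+1) = 2^l + 2^l by ring, Finset.prod_range_add]
  congr 1
  · exact Finset.prod_congr rfl fun i _ => by congr 1; ring
  · exact Finset.prod_congr rfl fun i _ => by congr 1; ring


lemma divM (M l j : ℕ) (hM : 0 < M) (hj : j < M) : (l*M+j)/M = l := by
  rw [show l*M+j = j + M*l by ring, Nat.add_mul_div_left _ _ hM, Nat.div_eq_of_lt hj,
    Nat.zero_add]

lemma modM (M l j : ℕ) (hM : 0 < M) (hj : j < M) : (l*M+j)%M = j := by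
  rw [show l*M+j = j + M*l by ring, Nat.add_mul_mod_self_left, Nat.mod_eq_of_lt hj]

section Geo
variable (n : ℕ)

def nodeF (l j : ℕ) : Fin ((n+1) + n*2^n) → ℝ := ee ((n+1) + n*2^n) (n+1 + (l*2^n + j))

def rootF : Fin ((n+1) + n*2^n) → ℝ := nodeF n (n-1) 0

def leafF (j : ℕ) : Fin ((n+1) + n*2^n) → ℝ :=
  if j < n then ee ((n+1) + n*2^n) j else rootF n

def uF : ℕ → ℕ → (Fin ((n+1) + n*2^n) → ℝ)
  | 0, j => leafF n j
  | (l+1), j => nodeF n l j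

def geoCons (i : ℕ) : Constr ((n+1) + n*2^n) :=
  if i < n then .lin (ee ((n+1) + n*2^n) i)
  else if i < n + n*2^n then
    .lin (nodeF n ((i-n)/2^n) ((i-n)%2^n))
  else if i < n + n*2^n + n*2^n then
    if (i - n - n*2^n) % 2^n < 2^(n-1-((i - n - n*2^n)/2^n)) then
      .hyp (nodeF n ((i - n - n*2^n)/2^n) ((i - n - n*2^n) % 2^n))
        (uF n ((i - n - n*2^n)/2^n) (2*((i - n - n*2^n) % 2^n)))
        (uF n ((i - n - n*2^n)/2^n) (2*((i - n - n*2^n) % 2^n)+1))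
    else .lin (fun _ => 0)
  else .lin (fun jj => rootF n jj - ee ((n+1) + n*2^n) n jj)

lemma node_lt (l j : ℕ) (hl : l < n) (hj : j < 2^n) : l*2^n + j < n*2^n :=
  calc l*2^n + j < l*2^n + 2^n := by omega
  _ = (l+1)*2^n := by ring
  _ ≤ n*2^n := Nat.mul_le_mul_right _ (by omega)

lemma geoCons_decode2 (l j : ℕ) (hl : l < n) (hj : j < 2^n) :
    geoCons n (n + (l*2^n + j)) = .lin (nodeF n l j) := by
  have hM : 0 < 2^n := Nat.pow_pos (by norm_num)
  have hlt := node_lt n l j hl hj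
  rw [geoCons, if_neg (by omega), if_pos (by omega), Nat.add_sub_cancel_left,
    divM _ _ _ hM hj, modM _ _ _ hM hj]

lemma geoCons_decode3 (l j : ℕ) (hl : l < n) (hjM : j < 2^n) (hj : j < 2^(n-1-l)) :
    geoCons n (n + n*2^n + (l*2^n + j)) =
      .hyp (nodeF n l j) (uF n l (2*j)) (uF n l (2*j+1)) := by
  have hM : 0 < 2^n := Nat.pow_pos (by norm_num)
  have hlt := node_lt n l j hl hjM
  have hsub : n + n*2^n + (l*2^n + j) - n - n*2^n = l*2^n + j := by omega
  rw [geoCons, if_neg (by omega), if_neg (by omega), if_pos (by omega), hsub,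
    divM _ _ _ hM hjM, modM _ _ _ hM hjM, if_pos hj]

lemma geoCons_decode3' (l j : ℕ) (hl : l < n) (hjM : j < 2^n) (hj : ¬ j < 2^(n-1-l)) :
    geoCons n (n + n*2^n + (l*2^n + j)) = .lin (fun _ => 0) := by
  have hM : 0 < 2^n := Nat.pow_pos (by norm_num)
  have hlt := node_lt n l j hl hjM
  have hsub : n + n*2^n + (l*2^n + j) - n - n*2^n = l*2^n + j := by omega
  rw [geoCons, if_neg (by omega), if_neg (by omega), if_pos (by omega), hsub,
    divM _ _ _ hM hjM, modM _ _ _ hM hjM, if_neg hj]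

lemma decompN (q : ℕ) (hq : q < n*2^n) :
    ∃ l j, l < n ∧ j < 2^n ∧ l*2^n + j = q := by
  have hM : 0 < 2^n := Nat.pow_pos (by norm_num)
  refine ⟨q / 2^n, q % 2^n, ?_, Nat.mod_lt _ hM, ?_⟩
  · exact Nat.div_lt_of_lt_mul (by rw [Nat.mul_comm]; exact hq)
  · rw [Nat.mul_comm]; exact Nat.div_add_mod q (2^n)

end Geo

lemma uF_eq_node (n l j : ℕ) (hl : 1 ≤ l) : uF n l j = nodeF n (l-1) j := by
  cases l with
  | zero => omega
  | succ l => simp [uF]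

lemma key (n : ℕ) (hn : 0 < n) (z : Fin (n+1) → ℝ) :
    ((∀ i : Fin n, 0 ≤ z i.castSucc) ∧
      z (Fin.last n) ≤ (∏ i : Fin n, z i.castSucc) ^ ((1:ℝ)/n)) ↔
    ∃ y : Fin (n*2^n) → ℝ, ∀ i, i < n + n*2^n + n*2^n + 1 →
      (geoCons n i).holds (Fin.append z y) := by
  have hM : 0 < 2^n := Nat.pow_pos (by norm_num)
  have hn2 : n < 2^n := Nat.lt_two_pow_self
  constructor
  · rintro ⟨hx, ht⟩
    set X := ∏ i : Fin n, z i.castSucc with hX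
    have hX0 : 0 ≤ X := Finset.prod_nonneg fun i _ => hx i
    set g := X ^ ((1:ℝ)/n) with hg
    have hg0 : 0 ≤ g := Real.rpow_nonneg hX0 _
    set A : ℕ → ℝ := fun j => if h : j < n then z ⟨j, by omega⟩ else g with hA
    have hAz : ∀ j (h : j < n), A j = z ⟨j, by omega⟩ := by
      intro j h; simp only [hA]; rw [dif_pos h]
    have hAg : ∀ j, n ≤ j → A j = g := by
      intro j h; simp only [hA]; rw [dif_neg (by omega)]
    have hA0 : ∀ j, 0 ≤ A j := by
      intro j
      by_cases h : j < n
      · rw [hAz j h]; exact hx ⟨j, h⟩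
      · rw [hAg j (by omega)]; exact hg0
    set W : ℕ → ℕ → ℝ :=
      fun l j => (∏ i ∈ Finset.range (2^l), A (j*2^l+i)) ^ ((1:ℝ)/(2^l : ℕ)) with hW
    have hB0 : ∀ l j, (0:ℝ) ≤ ∏ i ∈ Finset.range (2^l), A (j*2^l+i) :=
      fun l j => Finset.prod_nonneg fun i _ => hA0 _
    have hW0 : ∀ l j, 0 ≤ W l j := fun l j => Real.rpow_nonneg (hB0 l j) _
    have hWleaf : ∀ j, W 0 j = A j := by
      intro j; rw [hW]; simp
    have hWsq : ∀ l j, W (l+1) j ^ 2 = W l (2*j) * W l (2*j+1) := by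
      intro l j
      have hsplit := prodsplit A l j
      rw [hW]; dsimp only
      rw [← Real.rpow_natCast ((∏ i ∈ Finset.range (2^(l+1)), A (j*2^(l+1)+i)) ^
            ((1:ℝ)/(2^(l+1):ℕ))) 2,
          ← Real.rpow_mul (hB0 (l+1) j)]
      have he : ((1:ℝ)/((2^(l+1):ℕ):ℝ)) * ((2:ℕ):ℝ) = (1:ℝ)/((2^l : ℕ):ℝ) := by
        have hc : ((2^(l+1):ℕ):ℝ) = ((2^l:ℕ):ℝ) * 2 := by push_cast [pow_succ]; ring
        rw [hc, show ((2:ℕ):ℝ) = 2 by norm_num, one_div, one_div, mul_inv,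
          inv_mul_cancel_right₀ (two_ne_zero)]
      rw [he, hsplit, Real.mul_rpow (hB0 l (2*j)) (hB0 l (2*j+1))]
    have hWroot : W n 0 = g := by
      have hXg : g ^ n = X := by
        rw [hg, ← Real.rpow_natCast (X ^ ((1:ℝ)/n)) n, ← Real.rpow_mul hX0]
        rw [show ((1:ℝ)/n) * (n:ℝ) = 1 by field_simp]
        exact Real.rpow_one X
      have hprodA : ∏ i ∈ Finset.range (2^n), A (0*2^n+i) = g ^ (2^n) := by
        rw [Finset.prod_congr rfl (fun i _ => by rw [show 0*2^n+i = i by ring])]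
        rw [show 2^n = n + (2^n - n) by omega, Finset.prod_range_add]
        have h1 : ∏ i ∈ Finset.range n, A i = X := by
          rw [← Fin.prod_univ_eq_prod_range A n]
          exact Finset.prod_congr rfl fun i _ => by rw [hAz i.val i.isLt]; rfl
        have h2 : ∏ i ∈ Finset.range (2^n - n), A (n + i) = g ^ (2^n - n) := by
          rw [Finset.prod_congr rfl (fun i _ => hAg (n+i) (by omega)), Finset.prod_const,
            Finset.card_range]
        rw [h1, h2, ← hXg, ← pow_add, show n + (2^n - n) = 2^n by omega]
      rw [hW]; dsimp only
      rw [hprodA, ← Real.rpow_natCast g (2^n), ← Real.rpow_mul hg0]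
      rw [show ((2^n : ℕ):ℝ) * ((1:ℝ)/((2^n:ℕ):ℝ)) = 1 by
        have h2n0 : ((2^n : ℕ):ℝ) ≠ 0 := by positivity
        field_simp]
      exact Real.rpow_one g
    refine ⟨fun i => W (i.val / 2^n + 1) (i.val % 2^n), ?_⟩
    set y : Fin (n*2^n) → ℝ := fun i => W (i.val / 2^n + 1) (i.val % 2^n) with hy
    set v := Fin.append z y with hv
    have hnode : ∀ l j, l < n → j < 2^n → (∑ jj, nodeF n l j jj * v jj) = W (l+1) j := by
      intro l j hl hj
      have hlt := node_lt n l j hl hj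
      have hdim : n+1 + (l*2^n + j) < (n+1) + n*2^n := by omega
      rw [nodeF, lval_ee v _ hdim, hv, append_right' z y _ hlt]
      rw [hy]; dsimp only
      rw [divM _ _ _ hM hj, modM _ _ _ hM hj]
    have hroot : (∑ jj, rootF n jj * v jj) = g := by
      rw [rootF, hnode (n-1) 0 (by omega) hM]
      rw [show n-1+1 = n by omega, hWroot]
    have hleafv : ∀ j, (∑ jj, leafF n j jj * v jj) = A j := by
      intro j
      rw [leafF]
      split_ifs with h
      · rw [lval_ee v _ (show j < (n+1) + n*2^n by omega), hv,
          append_left' z y _ (by omega), hAz j h]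
      · rw [hroot, hAg j (by omega)]
    have huF : ∀ l j, l ≤ n → j < 2^n → (∑ jj, uF n l j jj * v jj) = W l j := by
      intro l j hl hj
      cases l with
      | zero => rw [show uF n 0 j = leafF n j from rfl, hleafv, hWleaf]
      | succ l => rw [show uF n (l+1) j = nodeF n l j from rfl, hnode l j (by omega) hj]
    intro i hi
    by_cases h1 : i < n
    · rw [geoCons, if_pos h1]
      simp only [Constr.holds]
      rw [lval_ee v _ (show i < (n+1) + n*2^n by omega), hv,
        append_left' z y _ (by omega)]
      exact hx ⟨i, h1⟩
    · by_cases h2 : i < n + n*2^n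
      · obtain ⟨l, j, hl, hj, hq⟩ := decompN n (i - n) (by omega)
        have hieq : i = n + (l*2^n + j) := by omega
        rw [hieq, geoCons_decode2 n l j hl hj]
        simp only [Constr.holds]
        rw [hnode l j hl hj]
        exact hW0 _ _
      · by_cases h3 : i < n + n*2^n + n*2^n
        · obtain ⟨l, j, hl, hj, hq⟩ := decompN n (i - n - n*2^n) (by omega)
          have hieq : i = n + n*2^n + (l*2^n + j) := by omega
          by_cases hgate : j < 2^(n-1-l)
          · rw [hieq, geoCons_decode3 n l j hl hj hgate]
            simp only [Constr.holds]
            have h2j : 2*j+1 < 2^n := by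
              calc 2*j+1 < 2*2^(n-1-l) := by omega
              _ = 2^(n-1-l+1) := by rw [pow_succ]; ring
              _ ≤ 2^n := Nat.pow_le_pow_right (by norm_num) (by omega)
            rw [hnode l j hl hj, huF l (2*j) (by omega) (by omega),
              huF l (2*j+1) (by omega) (by omega)]
            refine ⟨add_nonneg (hW0 _ _) (hW0 _ _), le_of_eq (hWsq l j)⟩
          · rw [hieq, geoCons_decode3' n l j hl hj hgate]
            simp only [Constr.holds]
            simp
        · have hieq : i = n + n*2^n + n*2^n := by omega
          rw [hieq, geoCons, if_neg (by omega), if_neg (by omega), if_neg (by omega)]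
          simp only [Constr.holds]
          have hsub : (∑ jj, (rootF n jj - ee ((n+1) + n*2^n) n jj) * v jj) =
              (∑ jj, rootF n jj * v jj) - (∑ jj, ee ((n+1) + n*2^n) n jj * v jj) := by
            rw [← Finset.sum_sub_distrib]
            exact Finset.sum_congr rfl fun jj _ => by ring
          rw [hsub, hroot, lval_ee v _ (show n < (n+1) + n*2^n by omega), hv,
            append_left' z y _ (by omega)]
          have hzl : z ⟨n, by omega⟩ = z (Fin.last n) := rfl
          rw [hzl]
          linarith [ht]
  · rintro ⟨y, H⟩
    set v := Fin.append z y with hv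
    have htv : (∑ jj, ee ((n+1)+n*2^n) n jj * v jj) = z (Fin.last n) := by
      rw [lval_ee v _ (show n < (n+1)+n*2^n by omega), hv, append_left' z y _ (by omega)]
      rfl
    set R := ∑ jj, rootF n jj * v jj with hR
    set Vl : ℕ → ℕ → ℝ := fun l j => ∑ jj, uF n l j jj * v jj with hVl
    have hVnode : ∀ l j, Vl (l+1) j = ∑ jj, nodeF n l j jj * v jj := fun l j => rfl
    have hz0 : ∀ i (h : i < n), 0 ≤ z ⟨i, by omega⟩ := by
      intro i h
      have hc := H i (by omega)
      rw [geoCons, if_pos h] at hc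
      simp only [Constr.holds] at hc
      rwa [lval_ee v _ (show i < (n+1)+n*2^n by omega), hv,
        append_left' z y _ (by omega)] at hc
    have hnn : ∀ l j, l < n → j < 2^n → 0 ≤ Vl (l+1) j := by
      intro l j hl hj
      have hlt := node_lt n l j hl hj
      have hc := H (n + (l*2^n+j)) (by omega)
      rw [geoCons_decode2 n l j hl hj] at hc
      simp only [Constr.holds] at hc
      rw [hVnode]; exact hc
    have hsq : ∀ l j, l < n → j < 2^(n-1-l) →
        Vl (l+1) j ^ 2 ≤ Vl l (2*j) * Vl l (2*j+1) := by
      intro l j hl hj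
      have hjM : j < 2^n := lt_of_lt_of_le hj (Nat.pow_le_pow_right (by norm_num) (by omega))
      have hlt := node_lt n l j hl hjM
      have hc := H (n + n*2^n + (l*2^n+j)) (by omega)
      rw [geoCons_decode3 n l j hl hjM hj] at hc
      simp only [Constr.holds] at hc
      rw [hVnode]; exact hc.2
    have hR0 : 0 ≤ R := by
      have hc := hnn (n-1) 0 (by omega) hM
      rw [hVnode] at hc
      rw [hR, rootF]; exact hc
    have hVn0 : Vl n 0 = R := by
      rw [hVl]; dsimp only
      rw [uF_eq_node n n 0 (by omega), hR, rootF]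
    have htR : z (Fin.last n) ≤ R := by
      have hc := H (n + n*2^n + n*2^n) (by omega)
      rw [geoCons, if_neg (by omega), if_neg (by omega), if_neg (by omega)] at hc
      simp only [Constr.holds] at hc
      have hsub : (∑ jj, (rootF n jj - ee ((n+1)+n*2^n) n jj) * v jj)
          = R - z (Fin.last n) := by
        rw [← htv, hR, ← Finset.sum_sub_distrib]
        exact Finset.sum_congr rfl fun jj _ => by ring
      rw [hsub] at hc
      linarith
    set AA : ℕ → ℝ := fun j => if h : j < n then z ⟨j, by omega⟩ else R with hAA
    have hAAz : ∀ j (h : j < n), AA j = z ⟨j, by omega⟩ := by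
      intro j h; simp only [hAA]; rw [dif_pos h]
    have hAAg : ∀ j, n ≤ j → AA j = R := by
      intro j h; simp only [hAA]; rw [dif_neg (by omega)]
    have hleaf : ∀ j, Vl 0 j = AA j := by
      intro j
      rw [hVl]; dsimp only
      rw [show uF n 0 j = leafF n j from rfl, leafF]
      split_ifs with h
      · rw [lval_ee v _ (by omega), hv, append_left' z y _ (by omega), hAAz j h]
      · rw [hAAg j (by omega)]
    have hAA0 : ∀ j, 0 ≤ AA j := by
      intro j
      by_cases h : j < n
      · rw [hAAz j h]; exact hz0 j h
      · rw [hAAg j (by omega)]; exact hR0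
    have main : ∀ l, l ≤ n → ∀ j, (j+1)*2^l ≤ 2^n →
        0 ≤ Vl l j ∧ Vl l j ^ (2^l) ≤ ∏ i ∈ Finset.range (2^l), AA (j*2^l + i) := by
      intro l
      induction l with
      | zero =>
        intro _ j _
        refine ⟨by rw [hleaf]; exact hAA0 j, ?_⟩
        simp [hleaf j]
      | succ l IH =>
        intro hl1 j hj
        have hl : l < n := by omega
        have he : 2^n = 2^(n-1-l) * 2^(l+1) := by rw [← pow_add]; congr 1; omega
        have hp : 0 < 2^(l+1) := Nat.pow_pos (by norm_num)
        have hgate : j < 2^(n-1-l) := by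
          by_contra hc
          push_neg at hc
          have h1 : 2^(n-1-l) * 2^(l+1) ≤ j * 2^(l+1) := Nat.mul_le_mul_right _ hc
          have h2 : (j+1)*2^(l+1) = j*2^(l+1) + 2^(l+1) := by ring
          omega
        have hjM : j < 2^n := by
          calc j < 2^(n-1-l) := hgate
          _ ≤ 2^n := Nat.pow_le_pow_right (by norm_num) (by omega)
        have hc1 : (2*j+2)*2^l = (j+1)*2^(l+1) := by rw [pow_succ]; ring
        have hc2 : (2*j+1)*2^l ≤ (2*j+2)*2^l := Nat.mul_le_mul_right _ (by omega)
        obtain ⟨c0n, c0p⟩ := IH (by omega) (2*j) (by omega)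
        obtain ⟨c1n, c1p⟩ := IH (by omega) (2*j+1)
          (by rw [show 2*j+1+1 = 2*j+2 by omega]; omega)
        have hnnj := hnn l j hl hjM
        have hsqj := hsq l j hl hgate
        refine ⟨hnnj, ?_⟩
        calc Vl (l+1) j ^ 2^(l+1) = (Vl (l+1) j ^ 2) ^ 2^l := by
              rw [← pow_mul, show 2*2^l = 2^(l+1) by rw [pow_succ]; ring]
          _ ≤ (Vl l (2*j) * Vl l (2*j+1)) ^ 2^l := pow_le_pow_left₀ (sq_nonneg _) hsqj _
          _ = Vl l (2*j) ^ 2^l * Vl l (2*j+1) ^ 2^l := mul_pow _ _ _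
          _ ≤ (∏ i ∈ Finset.range (2^l), AA ((2*j)*2^l + i)) *
              (∏ i ∈ Finset.range (2^l), AA ((2*j+1)*2^l + i)) :=
              mul_le_mul c0p c1p (pow_nonneg c1n _) (le_trans (pow_nonneg c0n _) c0p)
          _ = ∏ i ∈ Finset.range (2^(l+1)), AA (j*2^(l+1) + i) := (prodsplit AA l j).symm
    obtain ⟨hR0', hRp⟩ := main n (le_refl n) 0 (by omega)
    rw [hVn0] at hRp
    have hprod : ∏ i ∈ Finset.range (2^n), AA (0*2^n + i) =
        (∏ i : Fin n, z i.castSucc) * R^(2^n - n) := by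
      rw [Finset.prod_congr rfl (fun i _ => by rw [show 0*2^n+i = i by ring])]
      have h1 : ∏ i ∈ Finset.range n, AA i = ∏ i : Fin n, z i.castSucc := by
        rw [← Fin.prod_univ_eq_prod_range AA n]
        exact Finset.prod_congr rfl fun i _ => by rw [hAAz i.val i.isLt]; rfl
      have h2 : ∏ i ∈ Finset.range (2^n - n), AA (n + i) = R ^ (2^n - n) := by
        rw [Finset.prod_congr rfl (fun i _ => hAAg (n+i) (by omega)), Finset.prod_const,
          Finset.card_range]
      calc ∏ i ∈ Finset.range (2^n), AA i
          = (∏ i ∈ Finset.range n, AA i) * ∏ i ∈ Finset.range (2^n-n), AA (n+i) := by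
            rw [← Finset.prod_range_add, show n + (2^n - n) = 2^n by omega]
        _ = _ := by rw [h1, h2]
    rw [hprod] at hRp
    set X := ∏ i : Fin n, z i.castSucc with hX
    have hX0 : 0 ≤ X := Finset.prod_nonneg fun i _ => hz0 i.val i.isLt
    have hRn : R ^ n ≤ X := by
      rcases eq_or_lt_of_le hR0 with h0|h0
      · rw [← h0, zero_pow (show n ≠ 0 by omega)]; exact hX0
      · have hpos : 0 < R ^ (2^n - n) := pow_pos h0 _
        have hkey : R^n * R^(2^n-n) ≤ X * R^(2^n-n) := by
          rw [← pow_add, show n + (2^n - n) = 2^n by omega]; exact hRp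
        exact le_of_mul_le_mul_right hkey hpos
    constructor
    · intro i; exact hz0 i.val i.isLt
    · have h2 : ((R^n : ℝ)) ^ ((1:ℝ)/n) = R := by
        rw [← Real.rpow_natCast R n, ← Real.rpow_mul hR0,
          show (n:ℝ) * ((1:ℝ)/n) = 1 by field_simp, Real.rpow_one]
      have h1 : ((R^n : ℝ)) ^ ((1:ℝ)/n) ≤ X ^ ((1:ℝ)/n) :=
        Real.rpow_le_rpow (pow_nonneg hR0 n) hRn (by positivity)
      rw [h2] at h1
      exact le_trans htR h1

/-- SOC-representability of the geometric mean: the hypograph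
`{(x,t) : xᵢ ≥ 0 ∀i, t ≤ (x₁⋯xₙ)^{1/n}}` is SOC-representable. -/
theorem stmt_2 (n : ℕ) (hn : 0 < n) :
    SOCRep {z : Fin (n + 1) → ℝ |
      (∀ i : Fin n, 0 ≤ z i.castSucc) ∧
      z (Fin.last n) ≤ (∏ i : Fin n, z i.castSucc) ^ ((1 : ℝ) / n)} := by
  refine socRep_of_constraints (p := n*2^n) (N := n + n*2^n + n*2^n + 1) (by omega) _
    (fun i => geoCons n i.val) ?_
  intro z
  rw [Set.mem_setOf_eq, key n hn z]
  exact exists_congr fun y => ⟨fun h i => h i.val i.isLt, fun h i hi => h ⟨i, hi⟩⟩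
end

section
/- Let H be a real m × n matrix with m ≤ n, let K be a real m × k matrix of full column rank k ≤ m, and let U be a nonsingular m × m matrix of the form U = [V, K] (with U = K when k = m), where V ∈ ℝ^{m×(m−k)}. Suppose HᵀU^{−T} = Q̃R̃ is a QR decomposition, where Q̃ is an n × n orthogonal matrix and R̃ is an n × m upper triangular matrix with R̃ᵢᵢ ≥ 0 for all i ∈ {1,…,m} and with the zero-row property (R̃ᵢᵢ = 0 implies R̃ᵢ₁ = … = R̃ᵢₘ = 0). Let L* be the k × k lower triangular matrix defined by (L*ᵀ)ᵢⱼ = R̃_{m−k+i, m−k+j} for i,j ∈ {1,…,k}. Then L*L*ᵀ is the minimum, with respect to the Löwner order, of the set {X(HHᵀ)Xᵀ : X ∈ ℝ^{k×m}, XK = I_k}: for every left inverse X of K the matrix X(HHᵀ)Xᵀ − L*L*ᵀ is positive semidefinite, and there exists a left inverse X₀ of K with X₀(HHᵀ)X₀ᵀ = L*L*ᵀ. Thus L*L*ᵀ is a Cholesky factorization of the information matrix C_K(HHᵀ) for the parameter subsystem given by K. -/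
open Matrix Finset

private lemma sum_split' {a c b : ℕ} (hab : a + c = b) (f : Fin b → ℝ) :
    ∑ i, f i = (∑ i : Fin a, f ⟨i, by omega⟩) +
      ∑ j : Fin c, f ⟨a + (j : ℕ), by omega⟩ := by
  rw [← Fintype.sum_equiv (finSumFinEquiv.trans (finCongr hab))
      (fun x => f ((finSumFinEquiv.trans (finCongr hab)) x)) f (fun _ => rfl)]
  rw [Fintype.sum_sum_type]
  congr 1

/-- Lemma (Cholesky factorization of the information matrix): with
`H ∈ ℝ^{m×n}` (`m ≤ n`), `K ∈ ℝ^{m×k}` of full column rank (`k ≤ m`),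
`U = [V, K]` nonsingular, and a QR decomposition `HᵀU^{−T} = Q̃R̃` with nonnegative
diagonal and the zero-row property, the matrix `L*` extracted from the trailing
`k × k` block of `R̃` satisfies: `L*L*ᵀ` is the Löwner-minimum of
`{X(HHᵀ)Xᵀ : XK = I_k}`, i.e. `C_K(HHᵀ) = L*L*ᵀ`. -/
theorem stmt_4 (m n k : ℕ) (hm : m ≤ n) (hk : k ≤ m)
    (H : Matrix (Fin m) (Fin n) ℝ)
    (K : Matrix (Fin m) (Fin k) ℝ) (hK : K.rank = k)
    (U : Matrix (Fin m) (Fin m) ℝ) (hU : IsUnit U.det)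
    (hUK : ∀ (i : Fin m) (j : Fin k),
      U i ⟨m - k + (j : ℕ), by have := j.isLt; omega⟩ = K i j)
    (Qt : Matrix (Fin n) (Fin n) ℝ) (Rt : Matrix (Fin n) (Fin m) ℝ)
    (hQorth : Qtᵀ * Qt = 1)
    (hQR : Hᵀ * (U⁻¹)ᵀ = Qt * Rt)
    (hRtri : ∀ (i : Fin n) (j : Fin m), (j : ℕ) < (i : ℕ) → Rt i j = 0)
    (hRdiag : ∀ i : Fin m, 0 ≤ Rt (Fin.castLE hm i) i)
    (hRzero : ∀ i : Fin m, Rt (Fin.castLE hm i) i = 0 →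
      ∀ j : Fin m, Rt (Fin.castLE hm i) j = 0)
    (Lstar : Matrix (Fin k) (Fin k) ℝ)
    (hLstar : ∀ i j : Fin k,
      Lstar i j = Rt ⟨m - k + (j : ℕ), by have := j.isLt; omega⟩
        ⟨m - k + (i : ℕ), by have := i.isLt; omega⟩) :
    (∀ X : Matrix (Fin k) (Fin m) ℝ, X * K = 1 →
      (X * (H * Hᵀ) * Xᵀ - Lstar * Lstarᵀ).PosSemidef) ∧
    ∃ X₀ : Matrix (Fin k) (Fin m) ℝ, X₀ * K = 1 ∧
      X₀ * (H * Hᵀ) * X₀ᵀ = Lstar * Lstarᵀ := by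
  classical
  have hmk : m - k + k = m := by omega
  set emb : Fin k → Fin m := fun j => ⟨m - k + (j : ℕ), by have := j.isLt; omega⟩ with hemb
  set embL : Fin (m - k) → Fin m := fun i => ⟨(i : ℕ), by have := i.isLt; omega⟩ with hembL
  set R : Matrix (Fin m) (Fin m) ℝ := Matrix.of fun i j => Rt (Fin.castLE hm i) j with hR
  have hRval : ∀ (i j : Fin m), (j : ℕ) < (i : ℕ) → R i j = 0 :=
    fun i j h => hRtri (Fin.castLE hm i) j h
  have hLR : ∀ i j : Fin k, Lstar i j = R (emb j) (emb i) := by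
    intro i j; rw [hLstar i j]; rfl
  -- Step 1: Rtᵀ Rt = Rᵀ R
  have hRtRt : Rtᵀ * Rt = Rᵀ * R := by
    ext p q
    rw [Matrix.mul_apply, Matrix.mul_apply]
    simp only [Matrix.transpose_apply]
    have h1 : m + (n - m) = n := by omega
    rw [sum_split' h1 (fun i => Rt i p * Rt i q)]
    have h2 : (∑ j : Fin (n - m), Rt ⟨m + (j : ℕ), by omega⟩ p * Rt ⟨m + (j : ℕ), by omega⟩ q) = 0 := by
      apply Finset.sum_eq_zero
      intro j _
      exact mul_eq_zero_of_left
        (hRtri ⟨m + (j : ℕ), by omega⟩ p (Nat.lt_of_lt_of_le p.isLt (Nat.le_add_right m _))) _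
    rw [h2, add_zero]
    exact Finset.sum_congr rfl fun i _ => rfl
  -- Step 2: H Hᵀ = U (Rᵀ R) Uᵀ
  have hHH : H * Hᵀ = U * (Rᵀ * R) * Uᵀ := by
    have h1 : U⁻¹ * H = Rtᵀ * Qtᵀ := by
      have := congrArg Matrix.transpose hQR
      simpa [Matrix.transpose_mul, Matrix.transpose_transpose] using this
    have h2 : (U⁻¹ * H) * (U⁻¹ * H)ᵀ = Rᵀ * R := by
      rw [h1, Matrix.transpose_mul, Matrix.transpose_transpose]
      calc Rtᵀ * Qtᵀ * (Qtᵀᵀ * Rtᵀᵀ) = Rtᵀ * (Qtᵀ * Qtᵀᵀ) * Rtᵀᵀ := by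
            simp only [Matrix.mul_assoc]
        _ = Rᵀ * R := by
            rw [Matrix.transpose_transpose, Matrix.transpose_transpose, hQorth,
              Matrix.mul_one, hRtRt]
    have h3 : U * (U⁻¹ * H) = H := by
      rw [← Matrix.mul_assoc, Matrix.mul_nonsing_inv U hU, Matrix.one_mul]
    calc H * Hᵀ = (U * (U⁻¹ * H)) * (U * (U⁻¹ * H))ᵀ := by rw [h3]
      _ = U * ((U⁻¹ * H) * (U⁻¹ * H)ᵀ) * Uᵀ := by
          rw [Matrix.transpose_mul]; simp only [Matrix.mul_assoc]
      _ = U * (Rᵀ * R) * Uᵀ := by rw [h2]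
  -- bottom rows of R * Yᵀ
  have hAbot : ∀ (Y : Matrix (Fin k) (Fin m) ℝ),
      (∀ i j, Y i (emb j) = if i = j then 1 else 0) →
      ∀ (i' p : Fin k), (∑ l, R (emb i') l * Y p l) = Lstar p i' := by
    intro Y hY i' p
    rw [sum_split' hmk (fun l => R (emb i') l * Y p l)]
    have h1 : (∑ l : Fin (m - k), R (emb i') ⟨(l : ℕ), by omega⟩ * Y p ⟨(l : ℕ), by omega⟩) = 0 := by
      apply Finset.sum_eq_zero
      intro l _
      exact mul_eq_zero_of_left
        (hRval (emb i') ⟨(l : ℕ), by omega⟩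
          (Nat.lt_of_lt_of_le l.isLt (Nat.le_add_right (m - k) _))) _
    have h2 : (∑ l' : Fin k, R (emb i') ⟨m - k + (l' : ℕ), by omega⟩ *
        Y p ⟨m - k + (l' : ℕ), by omega⟩) = R (emb i') (emb p) := by
      calc (∑ l' : Fin k, R (emb i') ⟨m - k + (l' : ℕ), by omega⟩ *
            Y p ⟨m - k + (l' : ℕ), by omega⟩)
          = ∑ l' : Fin k, (if p = l' then R (emb i') (emb l') else 0) := by
            apply Finset.sum_congr rfl
            intro l' _
            have hYv : Y p (emb l') = if p = l' then 1 else 0 := hY p l'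
            show R (emb i') (emb l') * Y p (emb l') = _
            rw [hYv]
            by_cases h : p = l' <;> simp [h]
        _ = R (emb i') (emb p) := by simp
    rw [h1, h2, zero_add, hLR p i']
  -- key identity
  have key : ∀ Y : Matrix (Fin k) (Fin m) ℝ,
      (∀ i j, Y i (emb j) = if i = j then 1 else 0) →
      ∃ T : Matrix (Fin (m - k)) (Fin k) ℝ,
        (∀ i j, T i j = ∑ l, R (embL i) l * Y j l) ∧
        Y * (Rᵀ * R) * Yᵀ = Tᵀ * T + Lstar * Lstarᵀ := by
    intro Y hY
    refine ⟨Matrix.of fun i j => ∑ l, R (embL i) l * Y j l, fun i j => rfl, ?_⟩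
    have hA : Y * (Rᵀ * R) * Yᵀ = (R * Yᵀ)ᵀ * (R * Yᵀ) := by
      rw [Matrix.transpose_mul, Matrix.transpose_transpose]
      simp only [Matrix.mul_assoc]
    rw [hA]
    ext p q
    rw [Matrix.mul_apply]
    simp only [Matrix.transpose_apply]
    rw [sum_split' hmk (fun l => (R * Yᵀ) l p * (R * Yᵀ) l q)]
    have h1 : (∑ l : Fin (m - k), (R * Yᵀ) ⟨(l : ℕ), by omega⟩ p * (R * Yᵀ) ⟨(l : ℕ), by omega⟩ q)
        = ((Matrix.of fun i j => ∑ l, R (embL i) l * Y j l)ᵀ *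
           (Matrix.of fun i j => ∑ l, R (embL i) l * Y j l)) p q := by
      rw [Matrix.mul_apply]
      apply Finset.sum_congr rfl
      intro l _
      simp only [Matrix.transpose_apply, Matrix.of_apply]
      rfl
    have h2 : (∑ j : Fin k, (R * Yᵀ) ⟨m - k + (j : ℕ), by omega⟩ p *
        (R * Yᵀ) ⟨m - k + (j : ℕ), by omega⟩ q) = (Lstar * Lstarᵀ) p q := by
      rw [Matrix.mul_apply]
      apply Finset.sum_congr rfl
      intro j _
      have e1 : (R * Yᵀ) (emb j) p = Lstar p j := by
        rw [Matrix.mul_apply]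
        exact hAbot Y hY j p
      have e2 : (R * Yᵀ) (emb j) q = Lstar q j := by
        rw [Matrix.mul_apply]
        exact hAbot Y hY j q
      show (R * Yᵀ) (emb j) p * (R * Yᵀ) (emb j) q = Lstar p j * Lstarᵀ j q
      rw [e1, e2, Matrix.transpose_apply]
    rw [h1, h2, Matrix.add_apply]
  -- construction of the optimal Y₀
  set R11 : Matrix (Fin (m - k)) (Fin (m - k)) ℝ :=
    Matrix.of fun i j => R (embL i) (embL j) with hR11
  set R12 : Matrix (Fin (m - k)) (Fin k) ℝ :=
    Matrix.of fun i j => R (embL i) (emb j) with hR12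
  have hzrow : ∀ i : Fin (m - k), R11 i i = 0 →
      (∀ j, R11 i j = 0) ∧ (∀ j, R12 i j = 0) := by
    intro i h
    have h0 : Rt (Fin.castLE hm (embL i)) (embL i) = 0 := h
    have hall := hRzero (embL i) h0
    exact ⟨fun j => hall (embL j), fun j => hall (emb j)⟩
  set D : Matrix (Fin (m - k)) (Fin (m - k)) ℝ :=
    Matrix.of fun i j => if i = j ∧ R11 i i = 0 then 1 else 0 with hD
  set Mm : Matrix (Fin (m - k)) (Fin (m - k)) ℝ := R11 + D with hMm
  have hMtri : Mm.BlockTriangular id := by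
    intro i j hji
    have h1 : R11 i j = 0 :=
      hRval (embL i) (embL j) hji
    have h2 : D i j = 0 := by
      have : ¬(i = j ∧ R11 i i = 0) := fun h => absurd h.1 (by rintro rfl; exact lt_irrefl _ hji)
      simp [hD, this]
    show R11 i j + D i j = 0
    rw [h1, h2, add_zero]
  have hMdiag : ∀ i, Mm i i ≠ 0 := by
    intro i
    show R11 i i + D i i ≠ 0
    by_cases h : R11 i i = 0
    · rw [h]
      have : D i i = 1 := by simp [hD, h]
      rw [this]; norm_num
    · have : D i i = 0 := by simp [hD, h]
      rw [this, add_zero]; exact h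
  have hMunit : IsUnit Mm.det := by
    rw [Matrix.det_of_upperTriangular hMtri]
    exact isUnit_iff_ne_zero.mpr (Finset.prod_ne_zero_iff.mpr fun i _ => hMdiag i)
  set Pr : Matrix (Fin (m - k)) (Fin (m - k)) ℝ :=
    Matrix.of fun i j => if i = j ∧ R11 i i ≠ 0 then 1 else 0 with hPr
  have hPM : Pr * Mm = R11 := by
    ext i j
    rw [Matrix.mul_apply]
    rw [Finset.sum_eq_single i]
    · by_cases h : R11 i i = 0
      · have hp : Pr i i = 0 := by simp [hPr, h]
        rw [hp, zero_mul]
        exact ((hzrow i h).1 j).symm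
      · have hp : Pr i i = 1 := by simp [hPr, h]
        rw [hp, one_mul]
        show R11 i j + D i j = R11 i j
        have hd : D i j = 0 := by
          have : ¬(i = j ∧ R11 i i = 0) := fun hc => h hc.2
          simp [hD, this]
        rw [hd, add_zero]
    · intro b _ hb
      have : Pr i b = 0 := by
        have : ¬(i = b ∧ R11 i i ≠ 0) := fun hc => hb hc.1.symm
        simp [hPr, this]
      rw [this, zero_mul]
    · intro hmem; exact absurd (Finset.mem_univ i) hmem
  have hPR12 : Pr * R12 = R12 := by
    ext i j
    rw [Matrix.mul_apply]
    rw [Finset.sum_eq_single i]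
    · by_cases h : R11 i i = 0
      · have hp : Pr i i = 0 := by simp [hPr, h]
        rw [hp, zero_mul]
        exact ((hzrow i h).2 j).symm
      · have hp : Pr i i = 1 := by simp [hPr, h]
        rw [hp, one_mul]
    · intro b _ hb
      have : Pr i b = 0 := by
        have : ¬(i = b ∧ R11 i i ≠ 0) := fun hc => hb hc.1.symm
        simp [hPr, this]
      rw [this, zero_mul]
    · intro hmem; exact absurd (Finset.mem_univ i) hmem
  set W : Matrix (Fin (m - k)) (Fin k) ℝ := -(Mm⁻¹ * R12) with hW
  have hR11W : R11 * W = -R12 := by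
    rw [hW, Matrix.mul_neg, ← hPM, Matrix.mul_assoc Pr Mm, ← Matrix.mul_assoc Mm,
      Matrix.mul_nonsing_inv Mm hMunit, Matrix.one_mul, hPR12]
  set Y₀ : Matrix (Fin k) (Fin m) ℝ :=
    Matrix.of fun i l => if h : (l : ℕ) < m - k then W ⟨(l : ℕ), h⟩ i
      else if (i : ℕ) = (l : ℕ) - (m - k) then 1 else 0 with hY₀
  have hY₀emb : ∀ i j, Y₀ i (emb j) = if i = j then 1 else 0 := by
    intro i j
    have h1 : ¬((emb j : Fin m) : ℕ) < m - k := by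
      show ¬ m - k + (j : ℕ) < m - k; omega
    rw [hY₀]
    simp only [Matrix.of_apply]
    rw [dif_neg h1]
    have h2 : ((emb j : Fin m) : ℕ) - (m - k) = (j : ℕ) := by
      show m - k + (j : ℕ) - (m - k) = (j : ℕ); omega
    rw [h2]
    simp [Fin.ext_iff]
  have hY₀embL : ∀ i (l : Fin (m - k)), Y₀ i (embL l) = W l i := by
    intro i l
    rw [hY₀]
    simp only [Matrix.of_apply]
    rw [dif_pos (show ((embL l : Fin m) : ℕ) < m - k from l.isLt)]
  obtain ⟨T, hT, hkey⟩ := key Y₀ hY₀emb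
  have hT0 : T = 0 := by
    ext i j
    rw [hT i j, sum_split' hmk (fun l => R (embL i) l * Y₀ j l)]
    have e1 : (∑ l : Fin (m - k), R (embL i) ⟨(l : ℕ), by omega⟩ * Y₀ j ⟨(l : ℕ), by omega⟩)
        = (R11 * W) i j := by
      rw [Matrix.mul_apply]
      apply Finset.sum_congr rfl
      intro l _
      show R (embL i) (embL l) * Y₀ j (embL l) = R11 i l * W l j
      rw [hY₀embL j l]
      rfl
    have e2 : (∑ l' : Fin k, R (embL i) ⟨m - k + (l' : ℕ), by omega⟩ *
        Y₀ j ⟨m - k + (l' : ℕ), by omega⟩) = R12 i j := by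
      calc (∑ l' : Fin k, R (embL i) ⟨m - k + (l' : ℕ), by omega⟩ *
            Y₀ j ⟨m - k + (l' : ℕ), by omega⟩)
          = ∑ l' : Fin k, (if j = l' then R12 i l' else 0) := by
            apply Finset.sum_congr rfl
            intro l' _
            show R (embL i) (emb l') * Y₀ j (emb l') = _
            rw [hY₀emb j l']
            by_cases h : j = l' <;> simp [h] <;> rfl
        _ = R12 i j := by simp
    rw [e1, e2, hR11W]
    show (-R12) i j + R12 i j = (0 : Matrix (Fin (m - k)) (Fin k) ℝ) i j
    simp
  constructor
  · -- minimality
    intro X hXK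
    have hYe : ∀ i j, (X * U) i (emb j) = if i = j then 1 else 0 := by
      intro i j
      have hval : (X * U) i (emb j) = (X * K) i j := by
        rw [Matrix.mul_apply, Matrix.mul_apply]
        apply Finset.sum_congr rfl
        intro l _
        exact congrArg (fun t => X i l * t) (hUK l j)
      rw [hval, hXK, Matrix.one_apply]
    obtain ⟨T1, hT1, hkey1⟩ := key (X * U) hYe
    have hXH : X * (H * Hᵀ) * Xᵀ = (X * U) * (Rᵀ * R) * (X * U)ᵀ := by
      rw [hHH, Matrix.transpose_mul]
      simp only [Matrix.mul_assoc]
    rw [hXH, hkey1, add_sub_cancel_right]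
    have hpsd := Matrix.posSemidef_conjTranspose_mul_self T1
    have hc : T1ᴴ = T1ᵀ := by
      ext a b; simp [Matrix.conjTranspose_apply]
    rwa [hc] at hpsd
  · -- attainment
    refine ⟨Y₀ * U⁻¹, ?_, ?_⟩
    · ext i j
      have hX₀U : Y₀ * U⁻¹ * U = Y₀ := by
        rw [Matrix.mul_assoc, Matrix.nonsing_inv_mul U hU, Matrix.mul_one]
      have e : (Y₀ * U⁻¹ * K) i j = (Y₀ * U⁻¹ * U) i (emb j) := by
        rw [Matrix.mul_apply, Matrix.mul_apply]
        apply Finset.sum_congr rfl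
        intro l _
        exact congrArg (fun t => (Y₀ * U⁻¹) i l * t) (hUK l j).symm
      rw [e, hX₀U, hY₀emb, Matrix.one_apply]
    · have hX₀U : Y₀ * U⁻¹ * U = Y₀ := by
        rw [Matrix.mul_assoc, Matrix.nonsing_inv_mul U hU, Matrix.mul_one]
      have hXH : (Y₀ * U⁻¹) * (H * Hᵀ) * (Y₀ * U⁻¹)ᵀ = Y₀ * (Rᵀ * R) * Y₀ᵀ := by
        rw [hHH]
        have : (Y₀ * U⁻¹) * (U * (Rᵀ * R) * Uᵀ) * (Y₀ * U⁻¹)ᵀ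
            = (Y₀ * U⁻¹ * U) * (Rᵀ * R) * (Y₀ * U⁻¹ * U)ᵀ := by
          simp only [Matrix.transpose_mul, Matrix.mul_assoc]
        rw [this, hX₀U]
      rw [hXH, hkey, hT0]
      simp
end

section
/- Let H be a real m × n matrix with m ≤ n, let K be a real m × k matrix of full column rank k ≤ m, assume that every column of K lies in the column space of HHᵀ, and let G be any matrix satisfying (HHᵀ)G(HHᵀ) = HHᵀ. Then KᵀGK is positive definite, and for every Q ∈ ℝ^{n×k} and every lower triangular L ∈ ℝ^{k×k} such that HQ = KL and each column of Q has Euclidean norm at most 1 (‖Qeⱼ‖ ≤ 1 for all j ∈ {1,…,k}), the inequality (det L)² · det(KᵀGK) ≤ 1 holds. -/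
open Matrix

lemma myTrace_eq_sum_eigenvalues {k : ℕ} (B : Matrix (Fin k) (Fin k) ℝ)
    (hB : B.IsHermitian) : B.trace = ∑ i, hB.eigenvalues i := by
  simpa using hB.trace_eq_sum_eigenvalues

lemma myProd_le_one {k : ℕ} (hk : 0 < k) (μ : Fin k → ℝ) (h0 : ∀ i, 0 ≤ μ i)
    (hs : ∑ i, μ i ≤ k) : ∏ i, μ i ≤ 1 := by
  have hkR : (0:ℝ) < k := by exact_mod_cast hk
  have hgm := Real.geom_mean_le_arith_mean_weighted Finset.univ (fun _ => (k : ℝ)⁻¹) μ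
    (fun i _ => by positivity)
    (by simp [Finset.card_univ]; field_simp)
    (fun i _ => h0 i)
  have hsum : ∑ i, (k:ℝ)⁻¹ * μ i ≤ 1 := by
    rw [← Finset.mul_sum, inv_mul_le_iff₀ hkR]
    simpa using hs
  have h1 : ∏ i, μ i ^ ((k:ℝ)⁻¹) ≤ 1 := le_trans hgm hsum
  have h2 : ∏ i, μ i = (∏ i, μ i ^ ((k:ℝ)⁻¹)) ^ (k:ℕ) := by
    rw [← Finset.prod_pow]
    refine Finset.prod_congr rfl fun i _ => ?_
    rw [← Real.rpow_natCast (μ i ^ ((k:ℝ)⁻¹)) k, ← Real.rpow_mul (h0 i)]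
    simp [inv_mul_cancel₀ hkR.ne']
  rw [h2]
  exact pow_le_one₀ (Finset.prod_nonneg fun i _ => Real.rpow_nonneg (h0 i) _) h1

lemma myDet_le_one {k : ℕ} (B : Matrix (Fin k) (Fin k) ℝ) (hB : B.PosSemidef)
    (htr : B.trace ≤ (k : ℝ)) : B.det ≤ 1 := by
  rcases Nat.eq_zero_or_pos k with hk0 | hkpos
  · subst hk0
    simp [Matrix.det_isEmpty]
  · have hdet : B.det = ∏ i, hB.1.eigenvalues i := by
      simpa using hB.1.det_eq_prod_eigenvalues
    rw [hdet]
    exact myProd_le_one hkpos _ (fun i => hB.eigenvalues_nonneg i)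
      (by rw [← myTrace_eq_sum_eigenvalues B hB.1]; exact htr)

/-- Under the estimability condition `range K ⊆ range HHᵀ`, for any generalized inverse
`G` of `HHᵀ`, the matrix `KᵀGK` is positive definite, and every feasible pair `(Q, L)`
of the SOCP (with `L` lower triangular, `HQ = KL`, and unit-norm-bounded columns of `Q`)
satisfies `(det L)² · det(KᵀGK) ≤ 1`, i.e. `(det L)² ≤ det C_K(HHᵀ)`. -/
theorem stmt_5 (m n k : ℕ) (hm : m ≤ n) (hk : k ≤ m)
    (H : Matrix (Fin m) (Fin n) ℝ)
    (K : Matrix (Fin m) (Fin k) ℝ) (hK : K.rank = k)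
    (hest : ∀ j : Fin k, ∃ v : Fin m → ℝ, (H * Hᵀ) *ᵥ v = fun i => K i j)
    (G : Matrix (Fin m) (Fin m) ℝ)
    (hG : (H * Hᵀ) * G * (H * Hᵀ) = H * Hᵀ) :
    (Kᵀ * G * K).PosDef ∧
    ∀ (Q : Matrix (Fin n) (Fin k) ℝ) (L : Matrix (Fin k) (Fin k) ℝ),
      (∀ i j : Fin k, (i : ℕ) < (j : ℕ) → L i j = 0) →
      H * Q = K * L →
      (∀ j : Fin k, Real.sqrt (∑ i, Q i j ^ 2) ≤ 1) →
      L.det ^ 2 * (Kᵀ * G * K).det ≤ 1 := by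
  classical
  set A : Matrix (Fin m) (Fin m) ℝ := H * Hᵀ with hAdef
  choose Vc hVc using hest
  set V : Matrix (Fin m) (Fin k) ℝ := fun i j => Vc j i with hVdef
  have hAV : A * V = K := by
    ext i j
    have := congrFun (hVc j) i
    rw [Matrix.mul_apply]
    simpa [Matrix.mul_apply, Matrix.mulVec, dotProduct, hVdef] using this
  have hAT : Aᵀ = A := by simp [hAdef, Matrix.transpose_mul, Matrix.mul_assoc]
  set W : Matrix (Fin n) (Fin k) ℝ := Hᵀ * V with hWdef
  have hKT : Kᵀ = Vᵀ * A := by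
    rw [← hAV, Matrix.transpose_mul, hAT]
  have hWW : Wᵀ * W = Vᵀ * (A * V) := by
    rw [hWdef, Matrix.transpose_mul, Matrix.transpose_transpose, hAdef]
    simp only [Matrix.mul_assoc]
  have e1 : A * (G * (A * V)) = A * V := by
    have h := congrArg (fun M => M * V) hG
    simpa only [Matrix.mul_assoc] using h
  have hS : Kᵀ * G * K = Wᵀ * W := by
    rw [hWW, hKT, ← hAV]
    simp only [Matrix.mul_assoc]
    rw [e1]
  -- injectivity of K
  have hKinj : ∀ x : Fin k → ℝ, K *ᵥ x = 0 → x = 0 := by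
    intro x hx
    have hrn := LinearMap.finrank_range_add_finrank_ker K.mulVecLin
    have hrank : Module.finrank ℝ (LinearMap.range K.mulVecLin) = k := hK
    have hfk : Module.finrank ℝ (Fin k → ℝ) = k := by simp
    have hker : Module.finrank ℝ (LinearMap.ker K.mulVecLin) = 0 := by omega
    have hbot : LinearMap.ker K.mulVecLin = ⊥ :=
      Submodule.finrank_eq_zero.mp hker
    have hmem : x ∈ LinearMap.ker K.mulVecLin := by
      simpa [LinearMap.mem_ker, Matrix.mulVecLin_apply] using hx
    rw [hbot] at hmem
    simpa using hmem
  have hHW : H * W = K := by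
    rw [hWdef, ← Matrix.mul_assoc, ← hAdef, hAV]
  -- positive definiteness
  have hposdef : (Kᵀ * G * K).PosDef := by
    rw [hS]
    refine Matrix.posDef_iff_dotProduct_mulVec.mpr ⟨?_, ?_⟩
    · have h : (Wᵀ * W)ᵀ = Wᵀ * W := by
        rw [Matrix.transpose_mul, Matrix.transpose_transpose]
      simpa [Matrix.IsHermitian, Matrix.conjTranspose_eq_transpose_of_trivial] using h
    · intro x hx
      have hWx : W *ᵥ x ≠ 0 := by
        intro h
        apply hx
        apply hKinj
        rw [← hHW, ← Matrix.mulVec_mulVec, h, Matrix.mulVec_zero]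
      have key : dotProduct (star x) ((Wᵀ * W) *ᵥ x) = dotProduct (W *ᵥ x) (W *ᵥ x) := by
        rw [star_trivial, ← Matrix.mulVec_mulVec, Matrix.dotProduct_mulVec,
          Matrix.vecMul_transpose]
      rw [key]
      rcases Function.ne_iff.mp hWx with ⟨i, hi⟩
      have hpos : 0 < ∑ j, (W *ᵥ x) j * (W *ᵥ x) j :=
        Finset.sum_pos' (fun j _ => mul_self_nonneg _)
          ⟨i, Finset.mem_univ i, mul_self_pos.mpr hi⟩
      simpa [dotProduct] using hpos
  refine ⟨hposdef, ?_⟩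
  intro Q L _ hHQ hQnorm
  set S : Matrix (Fin k) (Fin k) ℝ := Kᵀ * G * K with hSdef
  have hSsym : Sᵀ = S := by
    rw [hS, Matrix.transpose_mul, Matrix.transpose_transpose]
  have hSunit : IsUnit S.det := hposdef.det_pos.ne'.isUnit
  have hVK : Vᵀ * K = S := by
    rw [hS, hWW, ← hAV]
  have hWQ : Wᵀ * Q = S * L := by
    calc Wᵀ * Q = Vᵀ * (H * Q) := by
          rw [hWdef, Matrix.transpose_mul, Matrix.transpose_transpose, Matrix.mul_assoc]
    _ = Vᵀ * K * L := by rw [hHQ, ← Matrix.mul_assoc]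
    _ = S * L := by rw [hVK]
  set P : Matrix (Fin n) (Fin n) ℝ := W * S⁻¹ * Wᵀ with hPdef
  have hinvsym : (S⁻¹)ᵀ = S⁻¹ := by
    rw [Matrix.transpose_nonsing_inv, hSsym]
  have hPsym : Pᵀ = P := by
    rw [hPdef, Matrix.transpose_mul (W * S⁻¹) Wᵀ, Matrix.transpose_mul W S⁻¹,
      Matrix.transpose_transpose, hinvsym, ← Matrix.mul_assoc]
  have hSS : S⁻¹ * S = 1 := Matrix.nonsing_inv_mul S hSunit
  have hSS' : S * S⁻¹ = 1 := Matrix.mul_nonsing_inv S hSunit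
  have hWTW : Wᵀ * W = S := hS.symm
  have hPP : P * P = P := by
    rw [hPdef]
    simp only [Matrix.mul_assoc]
    rw [← Matrix.mul_assoc Wᵀ W (S⁻¹ * Wᵀ), hWTW, ← Matrix.mul_assoc S S⁻¹ Wᵀ, hSS',
      Matrix.one_mul]
  set B : Matrix (Fin k) (Fin k) ℝ := Lᵀ * S * L with hBdef
  have hQW : Qᵀ * W = Lᵀ * S := by
    have h := congrArg Matrix.transpose hWQ
    rw [Matrix.transpose_mul, Matrix.transpose_transpose, Matrix.transpose_mul, hSsym] at h
    exact h
  have hB2 : B = Qᵀ * P * Q := by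
    rw [hBdef, hPdef]
    simp only [Matrix.mul_assoc]
    rw [hWQ, ← Matrix.mul_assoc S⁻¹ S L, hSS, Matrix.one_mul,
      ← Matrix.mul_assoc Qᵀ W L, hQW, Matrix.mul_assoc Lᵀ S L]
  have hBpsd : B.PosSemidef := by
    have h : (W * L)ᵀ * (W * L) = B := by
      rw [hBdef, Matrix.transpose_mul, Matrix.mul_assoc Lᵀ Wᵀ (W * L),
        ← Matrix.mul_assoc Wᵀ W L, hWTW, Matrix.mul_assoc Lᵀ S L]
    rw [← h]
    have h2 := Matrix.posSemidef_conjTranspose_mul_self (W * L)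
    simpa [Matrix.conjTranspose_eq_transpose_of_trivial] using h2
  have hproj : (1 - P) * (1 - P) = (1 - P) := by
    rw [Matrix.sub_mul, Matrix.mul_sub, Matrix.mul_sub, hPP]
    simp
  have hdiffpsd : (Qᵀ * Q - B).PosSemidef := by
    have hEq : Qᵀ * Q - B = ((1 - P) * Q)ᵀ * ((1 - P) * Q) := by
      rw [hB2, Matrix.transpose_mul, Matrix.transpose_sub, hPsym, Matrix.transpose_one,
        Matrix.mul_assoc Qᵀ (1 - P) ((1 - P) * Q), ← Matrix.mul_assoc (1 - P) (1 - P) Q,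
        hproj, Matrix.sub_mul, Matrix.one_mul, Matrix.mul_sub]
      simp only [Matrix.mul_assoc]
    rw [hEq]
    have h2 := Matrix.posSemidef_conjTranspose_mul_self ((1 - P) * Q)
    simpa [Matrix.conjTranspose_eq_transpose_of_trivial] using h2
  have htrdiff : 0 ≤ (Qᵀ * Q - B).trace := by
    have hdiag : ∀ i, 0 ≤ (Qᵀ * Q - B) i i := by
      intro i
      have h := hdiffpsd.dotProduct_mulVec_nonneg (Pi.single i 1)
      simpa [dotProduct, Matrix.mulVec, Pi.single_apply, Finset.sum_ite_eq] using h
    exact Finset.sum_nonneg fun i _ => hdiag i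
  have htrQ : (Qᵀ * Q).trace ≤ (k : ℝ) := by
    have hcol : ∀ j : Fin k, ∑ i, Q i j ^ 2 ≤ 1 := by
      intro j
      have h1 := hQnorm j
      have h0 : 0 ≤ ∑ i, Q i j ^ 2 := Finset.sum_nonneg fun i _ => sq_nonneg _
      nlinarith [Real.sq_sqrt h0, Real.sqrt_nonneg (∑ i, Q i j ^ 2)]
    calc (Qᵀ * Q).trace = ∑ j, ∑ i, Q i j ^ 2 := by
          simp [Matrix.trace, Matrix.diag, Matrix.mul_apply, sq]
    _ ≤ ∑ _j : Fin k, (1:ℝ) := Finset.sum_le_sum fun j _ => hcol j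
    _ = (k : ℝ) := by simp
  have htrB : B.trace ≤ (k : ℝ) := by
    have h := Matrix.trace_sub (Qᵀ * Q) B
    linarith [htrdiff, htrQ]
  have hdetB : B.det ≤ 1 := myDet_le_one B hBpsd htrB
  have hBdet : B.det = L.det ^ 2 * S.det := by
    rw [hBdef, Matrix.det_mul, Matrix.det_mul, Matrix.det_transpose]
    ring
  rw [← hBdet]
  exact hdetB
end

section
/- Let H be a real m × n matrix with m ≤ n, let K be a real m × k matrix of full column rank k ≤ m, assume that every column of K lies in the column space of HHᵀ, and let G be any matrix satisfying (HHᵀ)G(HHᵀ) = HHᵀ. Then there exist Q ∈ ℝ^{n×k} and a lower triangular L ∈ ℝ^{k×k} such that HQ = KL, each column of Q has Euclidean norm at most 1, and (det L)² · det(KᵀGK) = 1; that is, the maximum of det L over this feasible set is attained and its square equals det C_K(HHᵀ) = 1/det(KᵀGK). -/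
open Matrix

lemma det_irrel {ι : Type*} [Fintype ι] {R : Type*} [CommRing R] (i1 i2 : DecidableEq ι)
    (M : Matrix ι ι R) : @Matrix.det ι i1 _ R _ M = @Matrix.det ι i2 _ R _ M := by congr!

lemma myPosDef_conj {ι : Type*} [Fintype ι] [DecidableEq ι] (A B : Matrix ι ι ℝ)
    (hA : A.PosDef) (hB : IsUnit B.det) : (B * A * Bᵀ).PosDef := by
  haveI : Invertible B := B.invertibleOfIsUnitDet hB
  haveI : Invertible Bᵀ := B.invertibleTranspose
  rw [posDef_iff_dotProduct_mulVec] at hA ⊢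
  constructor
  · have h := hA.1
    rw [IsHermitian, conjTranspose_eq_transpose_of_trivial] at h ⊢
    rw [transpose_mul, transpose_mul, transpose_transpose, h, Matrix.mul_assoc]
  · intro x hx
    have hBx : Bᵀ *ᵥ x ≠ 0 := fun h => hx <|
      (Bᵀ).mulVec_injective_of_invertible (by simpa using h)
    have key : star x ⬝ᵥ ((B * A * Bᵀ) *ᵥ x)
        = star (Bᵀ *ᵥ x) ⬝ᵥ (A *ᵥ (Bᵀ *ᵥ x)) := by
      rw [star_trivial, star_trivial, ← mulVec_mulVec, ← mulVec_mulVec,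
        dotProduct_mulVec, ← transpose_transpose B, vecMul_transpose, transpose_transpose]
    rw [key]
    exact hA.2 hBx

lemma myPosDef_submatrix {k : ℕ} (A : Matrix (Fin k) (Fin k) ℝ) (hA : A.PosDef)
    (e : Equiv.Perm (Fin k)) : (A.submatrix ⇑e ⇑e).PosDef := by
  rw [posDef_iff_dotProduct_mulVec] at hA ⊢
  constructor
  · have h := hA.1
    rw [IsHermitian, conjTranspose_eq_transpose_of_trivial] at h ⊢
    rw [transpose_submatrix, h]
  · intro x hx
    have hxe : x ∘ ⇑e.symm ≠ 0 := by
      intro h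
      apply hx
      funext i
      have := congrFun h (e i)
      simpa using this
    have key : star x ⬝ᵥ ((A.submatrix ⇑e ⇑e) *ᵥ x)
        = star (x ∘ ⇑e.symm) ⬝ᵥ (A *ᵥ (x ∘ ⇑e.symm)) := by
      rw [star_trivial, star_trivial, submatrix_mulVec_equiv]
      simp only [dotProduct, Function.comp_apply]
      exact Fintype.sum_equiv e _ _ (fun i => by simp)
    rw [key]
    exact hA.2 hxe

set_option maxHeartbeats 1000000 in
/-- Attainment in the SOCP for the `D_K`-criterion: under the estimability condition,
there is a feasible pair `(Q, L)` (with `L` lower triangular, `HQ = KL`, unit-norm-bounded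
columns of `Q`) achieving `(det L)² · det(KᵀGK) = 1`, i.e.
`(det L)² = det C_K(HHᵀ) = 1/det(KᵀGK)`. -/
theorem stmt_6 (m n k : ℕ) (hm : m ≤ n) (hk : k ≤ m)
    (H : Matrix (Fin m) (Fin n) ℝ)
    (K : Matrix (Fin m) (Fin k) ℝ) (hK : K.rank = k)
    (hest : ∀ j : Fin k, ∃ v : Fin m → ℝ, (H * Hᵀ) *ᵥ v = fun i => K i j)
    (G : Matrix (Fin m) (Fin m) ℝ)
    (hG : (H * Hᵀ) * G * (H * Hᵀ) = H * Hᵀ) :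
    ∃ (Q : Matrix (Fin n) (Fin k) ℝ) (L : Matrix (Fin k) (Fin k) ℝ),
      (∀ i j : Fin k, (i : ℕ) < (j : ℕ) → L i j = 0) ∧
      H * Q = K * L ∧
      (∀ j : Fin k, Real.sqrt (∑ i, Q i j ^ 2) ≤ 1) ∧
      L.det ^ 2 * (Kᵀ * G * K).det = 1 := by
  rcases Nat.eq_zero_or_pos k with hk0 | hk0
  · subst hk0
    refine ⟨0, 1, fun i j _ => i.elim0, ?_, fun j => j.elim0, ?_⟩
    · ext i j; exact j.elim0
    · simp [Matrix.det_fin_zero]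
  haveI : NeZero k := ⟨hk0.ne'⟩
  choose v hv using hest
  set M : Matrix (Fin m) (Fin m) ℝ := H * Hᵀ with hM
  have hMsymm : Mᵀ = M := by rw [hM, transpose_mul, transpose_transpose]
  set V : Matrix (Fin m) (Fin k) ℝ := Matrix.of (fun i j => v j i) with hVdef
  have hMV : M * V = K := by
    ext i j
    have := congrFun (hv j) i
    simpa [Matrix.mul_apply, Matrix.mulVec, dotProduct, hVdef] using this
  set W : Matrix (Fin n) (Fin k) ℝ := Hᵀ * V with hWdef
  have hHW : H * W = K := by rw [hWdef, ← Matrix.mul_assoc]; exact hMV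
  set A : Matrix (Fin k) (Fin k) ℝ := Wᵀ * W with hAdef
  have hKGK : Kᵀ * G * K = A := by
    have hKt : Kᵀ = Vᵀ * M := by rw [← hMV, transpose_mul, hMsymm]
    calc Kᵀ * G * K = Vᵀ * M * G * (M * V) := by rw [hKt, hMV]
      _ = Vᵀ * (M * G * M) * V := by simp only [Matrix.mul_assoc]
      _ = Vᵀ * M * V := by rw [hG, Matrix.mul_assoc]
      _ = A := by
          rw [hAdef, hWdef, transpose_mul, transpose_transpose, hM]
          simp only [Matrix.mul_assoc]
  have hWrank : W.rank = k := by
    refine le_antisymm (le_trans (W.rank_le_card_width) (by simp)) ?_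
    calc k = K.rank := hK.symm
      _ = (H * W).rank := by rw [hHW]
      _ ≤ W.rank := rank_mul_le_right H W
  have hWinj : ∀ x : Fin k → ℝ, W *ᵥ x = 0 → x = 0 := by
    have h1 := W.mulVecLin.finrank_range_add_finrank_ker
    have hrange : Module.finrank ℝ (LinearMap.range W.mulVecLin) = k := hWrank
    have hdom : Module.finrank ℝ (Fin k → ℝ) = k := by simp
    have hker : Module.finrank ℝ (LinearMap.ker W.mulVecLin) = 0 := by omega
    have hbot : LinearMap.ker W.mulVecLin = ⊥ := Submodule.finrank_eq_zero.mp hker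
    intro x hx
    have hmem : x ∈ LinearMap.ker W.mulVecLin := by simpa [Matrix.mulVecLin] using hx
    rw [hbot] at hmem
    simpa using hmem
  have hApd : A.PosDef := by
    rw [posDef_iff_dotProduct_mulVec]
    constructor
    · rw [IsHermitian, conjTranspose_eq_transpose_of_trivial, hAdef, transpose_mul,
        transpose_transpose]
    · intro x hx
      have hWx : W *ᵥ x ≠ 0 := fun h => hx (hWinj x h)
      have key : star x ⬝ᵥ (A *ᵥ x) = (W *ᵥ x) ⬝ᵥ (W *ᵥ x) := by
        rw [star_trivial, hAdef, ← mulVec_mulVec, dotProduct_mulVec, vecMul_transpose]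
      rw [key]
      obtain ⟨i, hi⟩ := Function.ne_iff.mp hWx
      have hi' : (W *ᵥ x) i ≠ 0 := hi
      rw [dotProduct]
      exact Finset.sum_pos' (fun j _ => mul_self_nonneg _)
        ⟨i, Finset.mem_univ i, mul_self_pos.mpr hi'⟩
  set A' : Matrix (Fin k) (Fin k) ℝ := A.submatrix ⇑(Fin.revPerm (n := k)) ⇑Fin.revPerm
    with hA'def
  have hA'pd : A'.PosDef := myPosDef_submatrix A hApd Fin.revPerm
  haveI : WellFoundedLT (Fin k) := Finite.to_wellFoundedLT
  haveI : LocallyFiniteOrderBot (Fin k) := inferInstance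
  set B : Matrix (Fin k) (Fin k) ℝ := LDL.lowerInv hA'pd with hBdef
  set d : Fin k → ℝ := LDL.diagEntries hA'pd with hddef
  have hdiag : LDL.diag hA'pd = diagonal d := by
    rw [LDL.diag]
  have hBAB : B * A' * Bᵀ = diagonal d := by
    rw [← conjTranspose_eq_transpose_of_trivial, hBdef, ← LDL.diag_eq_lowerInv_conj hA'pd]
    exact hdiag
  have hBdet : IsUnit B.det := by
    rw [hBdef]
    have h1 := @Matrix.isUnit_det_of_invertible (Fin k) ℝ _
      (fun a b => LinearOrder.toDecidableEq a b) _ _ (LDL.invertibleLowerInv hA'pd)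
    rwa [det_irrel _ (instDecidableEqFin k)] at h1
  have hdpos : ∀ i, 0 < d i := by
    rw [← posDef_diagonal_iff (d := d), ← hBAB]
    exact myPosDef_conj A' B hA'pd hBdet
  set C : Matrix (Fin k) (Fin k) ℝ := B.submatrix ⇑(Fin.revPerm (n := k)) ⇑Fin.revPerm with hCdef
  have hCAC : C * A * Cᵀ = diagonal (d ∘ ⇑(Fin.revPerm (n := k))) := by
    have hAeq : A = A'.submatrix ⇑(Fin.revPerm (n := k)) ⇑Fin.revPerm := by
      rw [hA'def, submatrix_submatrix]
      ext i j
      simp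
    rw [hCdef, hAeq, transpose_submatrix, submatrix_mul_equiv, submatrix_mul_equiv, hBAB,
      submatrix_diagonal_equiv]
  set s : Fin k → ℝ := fun i => (Real.sqrt (d (Fin.rev i)))⁻¹ with hsdef
  set L : Matrix (Fin k) (Fin k) ℝ := Cᵀ * diagonal s with hLdef
  have hLtri : ∀ i j : Fin k, (i : ℕ) < (j : ℕ) → L i j = 0 := by
    intro i j hij
    have hij' : i < j := hij
    have hC0 : C j i = 0 := by
      rw [hCdef]
      exact LDL.lowerInv_triangular hA'pd (by simpa using hij')
    rw [hLdef, Matrix.mul_apply]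
    simp [Matrix.diagonal_apply, Matrix.transpose_apply, mul_ite, hC0]
  have hLAL : Lᵀ * A * L = 1 := by
    rw [hLdef, transpose_mul, transpose_transpose, diagonal_transpose]
    calc diagonal s * C * A * (Cᵀ * diagonal s)
        = diagonal s * (C * A * Cᵀ) * diagonal s := by simp only [Matrix.mul_assoc]
      _ = diagonal s * diagonal (d ∘ ⇑(Fin.revPerm (n := k))) * diagonal s := by rw [hCAC]
      _ = 1 := by
          rw [diagonal_mul_diagonal, diagonal_mul_diagonal]
          ext i j
          rcases eq_or_ne i j with rfl | hne
          · rw [diagonal_apply_eq, Matrix.one_apply_eq]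
            simp only [Pi.mul_apply, Function.comp_apply, Fin.revPerm_apply, hsdef]
            have h0 := hdpos (Fin.rev i)
            have hmul : Real.sqrt (d i.rev) * Real.sqrt (d i.rev) = d i.rev :=
              Real.mul_self_sqrt h0.le
            have hsne : Real.sqrt (d i.rev) ≠ 0 := (Real.sqrt_pos.mpr h0).ne'
            have hre : (Real.sqrt (d i.rev))⁻¹ * d i.rev * (Real.sqrt (d i.rev))⁻¹
                = d i.rev / (Real.sqrt (d i.rev) * Real.sqrt (d i.rev)) := by ring
            rw [hre, hmul, div_self h0.ne']
          · rw [diagonal_apply_ne _ hne, Matrix.one_apply_ne hne]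
  refine ⟨W * L, L, hLtri, ?_, ?_, ?_⟩
  · rw [← Matrix.mul_assoc, hHW]
  · intro j
    have hQQ : ((W * L)ᵀ * (W * L)) j j = 1 := by
      rw [transpose_mul, Matrix.mul_assoc, ← Matrix.mul_assoc Wᵀ W L, ← hAdef,
        ← Matrix.mul_assoc, hLAL]
      simp
    have hsum : ∑ i, (W * L) i j ^ 2 = 1 := by
      rw [← hQQ, Matrix.mul_apply]
      exact Finset.sum_congr rfl (fun i _ => by rw [Matrix.transpose_apply]; ring)
    rw [hsum, Real.sqrt_one]
  · have hdet : L.det ^ 2 * A.det = 1 := by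
      have h := congrArg Matrix.det hLAL
      rw [det_mul, det_mul, det_transpose, det_one] at h
      nlinarith [h]
    rw [hKGK]
    exact hdet
end

section
/- Let A₁,…,A_s be real matrices with Aᵢ of size m × ℓᵢ, let w ∈ ℝ₊ˢ be a nonnegative weight vector, let M(w) = Σᵢ wᵢAᵢAᵢᵀ, let K be an m × k matrix of full column rank with every column of K in the column space of M(w), and let G satisfy M(w)·G·M(w) = M(w). Then for all matrices Zᵢ ∈ ℝ^{ℓᵢ×k} (i = 1,…,s), all scalars tᵢⱼ ≥ 0 (i = 1,…,s, j = 1,…,k) and every lower triangular J ∈ ℝ^{k×k} satisfying Σᵢ AᵢZᵢ = KJ, ‖Zᵢeⱼ‖² ≤ tᵢⱼ·wᵢ for all i,j, and Σᵢ tᵢⱼ ≤ Jⱼⱼ for all j, the inequality (∏ⱼ Jⱼⱼ) · det(KᵀGK) ≤ 1 holds. -/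
open Matrix

/-- determinant of a real PSD matrix with trace at most `k` is at most 1 (AM-GM). -/
lemma aux_det_le_one_of_trace {k : ℕ} {Q : Matrix (Fin k) (Fin k) ℝ}
    (hQ : Q.PosSemidef) (htr : ∑ j, Q j j ≤ (k : ℝ)) : Q.det ≤ 1 := by
  rcases Nat.eq_zero_or_pos k with hk | hk
  · subst hk
    simp [Matrix.det_fin_zero]
  have hHerm : Q.IsHermitian := hQ.isHermitian
  set μ := hHerm.eigenvalues with hμ
  have hμ0 : ∀ i, 0 ≤ μ i := fun i => hQ.eigenvalues_nonneg i
  have hdet : Q.det = ∏ i, μ i := by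
    simpa using hHerm.det_eq_prod_eigenvalues
  have htrace : ∑ i, μ i = ∑ j, Q j j := by
    have h1 := hHerm.trace_eq_sum_eigenvalues
    simpa [Matrix.trace, Matrix.diag] using h1.symm
  have hk0 : (k : ℝ) ≠ 0 := Nat.cast_ne_zero.mpr hk.ne'
  have hgm := Real.geom_mean_le_arith_mean_weighted Finset.univ
      (fun _ => (k : ℝ)⁻¹) μ (fun _ _ => by positivity)
      (by simp [Finset.sum_const]; field_simp) (fun i _ => hμ0 i)
  have h2 : ∑ i, (k : ℝ)⁻¹ * μ i ≤ 1 := by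
    rw [← Finset.mul_sum]
    calc (k:ℝ)⁻¹ * ∑ i, μ i ≤ (k:ℝ)⁻¹ * k := by
          apply mul_le_mul_of_nonneg_left _ (by positivity)
          rw [htrace]; exact htr
      _ = 1 := by field_simp
  have h3 : ∏ i, μ i ^ ((k : ℝ)⁻¹) ≤ 1 := le_trans hgm h2
  have h4 : (∏ i, μ i ^ ((k : ℝ)⁻¹)) ^ (k : ℝ) ≤ 1 :=
    Real.rpow_le_one (Finset.prod_nonneg fun i _ => Real.rpow_nonneg (hμ0 i) _) h3
      (by positivity)
  calc Q.det = ∏ i, μ i := hdet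
    _ = (∏ i, μ i ^ ((k : ℝ)⁻¹)) ^ (k : ℝ) := by
        rw [← Real.finset_prod_rpow _ _ (fun i _ => Real.rpow_nonneg (hμ0 i) _)]
        refine Finset.prod_congr rfl fun i _ => ?_
        rw [← Real.rpow_mul (hμ0 i), inv_mul_cancel₀ hk0, Real.rpow_one]
    _ ≤ 1 := h4

/-- Hadamard-type bound: real PSD matrix with diagonal dominated by positive `c`. -/
lemma aux_det_le_prod {k : ℕ} {P : Matrix (Fin k) (Fin k) ℝ}
    (hP : P.PosSemidef) (c : Fin k → ℝ) (hc : ∀ j, 0 < c j)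
    (hd : ∀ j, P j j ≤ c j) : P.det ≤ ∏ j, c j := by
  set d : Fin k → ℝ := fun j => (Real.sqrt (c j))⁻¹ with hdd
  set D := Matrix.diagonal d with hD
  have hDsym : Dᴴ = D := by
    rw [Matrix.conjTranspose_eq_transpose_of_trivial, hD, Matrix.diagonal_transpose]
  have hQpsd : (D * P * D).PosSemidef := by
    have := hP.mul_mul_conjTranspose_same D
    rwa [hDsym] at this
  have hdpos : ∀ j, 0 < d j := fun j => by
    have := hc j; positivity
  have hQdiag : ∀ j, (D * P * D) j j = d j * P j j * d j := by
    intro j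
    rw [Matrix.mul_diagonal, Matrix.diagonal_mul]
  have hdsq : ∀ j, d j * c j * d j = 1 := by
    intro j
    have h1 : Real.sqrt (c j) * Real.sqrt (c j) = c j := Real.mul_self_sqrt (hc j).le
    have hs : Real.sqrt (c j) ≠ 0 := ne_of_gt (Real.sqrt_pos.mpr (hc j))
    rw [hdd]
    simp only
    rw [← h1]
    field_simp
    rw [Real.sqrt_sq (Real.sqrt_nonneg _)]
  have htr : ∑ j, (D * P * D) j j ≤ (k : ℝ) := by
    calc ∑ j, (D * P * D) j j ≤ ∑ _j : Fin k, (1:ℝ) := by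
          apply Finset.sum_le_sum
          intro j _
          rw [hQdiag j, ← hdsq j]
          exact mul_le_mul_of_nonneg_right
            (mul_le_mul_of_nonneg_left (hd j) (hdpos j).le) (hdpos j).le
      _ = k := by simp
  have hdet1 : (D * P * D).det ≤ 1 := aux_det_le_one_of_trace hQpsd htr
  have hdetQ : (D * P * D).det = (∏ j, d j) * P.det * (∏ j, d j) := by
    rw [Matrix.det_mul, Matrix.det_mul, hD, Matrix.det_diagonal]
  have hprod : (∏ j, d j) * (∏ j, d j) * (∏ j, c j) = 1 := by
    rw [← Finset.prod_mul_distrib, ← Finset.prod_mul_distrib]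
    rw [← Finset.prod_const_one (s := (Finset.univ : Finset (Fin k)))]
    refine Finset.prod_congr rfl fun j _ => ?_
    rw [mul_assoc, mul_comm (d j) (c j), ← mul_assoc]
    exact hdsq j
  have hcpos : 0 < ∏ j, c j := Finset.prod_pos fun j _ => hc j
  nlinarith [hdet1, hdetQ, hprod, hcpos]


lemma aux_dot_mulVec {n1 n2 : ℕ} (B : Matrix (Fin n1) (Fin n2) ℝ)
    (u : Fin n1 → ℝ) (v : Fin n2 → ℝ) :
    u ⬝ᵥ (B *ᵥ v) = (Bᵀ *ᵥ u) ⬝ᵥ v := by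
  rw [Matrix.dotProduct_mulVec, ← Matrix.mulVec_transpose]

lemma aux_dot_transpose {n1 n2 : ℕ} (B : Matrix (Fin n1) (Fin n2) ℝ)
    (y : Fin n2 → ℝ) (v : Fin n1 → ℝ) :
    y ⬝ᵥ (Bᵀ *ᵥ v) = (B *ᵥ y) ⬝ᵥ v := by
  rw [aux_dot_mulVec, Matrix.transpose_transpose]

lemma aux_sum_mulVec {n m' : ℕ} {ι : Type*} (sf : Finset ι)
    (B : ι → Matrix (Fin n) (Fin m') ℝ) (v : Fin m' → ℝ) :
    (∑ i ∈ sf, B i) *ᵥ v = ∑ i ∈ sf, B i *ᵥ v := by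
  funext r
  simp only [Matrix.mulVec, dotProduct, Matrix.sum_apply, Finset.sum_apply, Finset.sum_mul]
  exact Finset.sum_comm

lemma aux_dotProduct_sum {n : ℕ} {ι : Type*} (sf : Finset ι)
    (u : Fin n → ℝ) (f : ι → Fin n → ℝ) :
    u ⬝ᵥ (∑ i ∈ sf, f i) = ∑ i ∈ sf, u ⬝ᵥ f i := by
  simp only [dotProduct, Finset.sum_apply, Finset.mul_sum]
  exact Finset.sum_comm


/-- Weak duality part of the SOCP characterization of the `D_K`-criterion
(Theorem `det_socr`): every feasible point `(Zᵢ, tᵢⱼ, J)` of the SOCP satisfies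
`(∏ⱼ Jⱼⱼ) · det(KᵀGK) ≤ 1`, i.e. `∏ⱼ Jⱼⱼ ≤ det C_K(M(w))`. -/
theorem stmt_7 (s m k : ℕ) (ℓ : Fin s → ℕ)
    (A : (i : Fin s) → Matrix (Fin m) (Fin (ℓ i)) ℝ)
    (w : Fin s → ℝ) (hw : ∀ i, 0 ≤ w i)
    (K : Matrix (Fin m) (Fin k) ℝ) (hK : K.rank = k) (hk : k ≤ m)
    (hest : ∀ j : Fin k, ∃ v : Fin m → ℝ,
      (∑ i, w i • (A i * (A i)ᵀ)) *ᵥ v = fun r => K r j)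
    (G : Matrix (Fin m) (Fin m) ℝ)
    (hG : (∑ i, w i • (A i * (A i)ᵀ)) * G * (∑ i, w i • (A i * (A i)ᵀ)) =
      ∑ i, w i • (A i * (A i)ᵀ))
    (Z : (i : Fin s) → Matrix (Fin (ℓ i)) (Fin k) ℝ)
    (t : Fin s → Fin k → ℝ) (ht : ∀ i j, 0 ≤ t i j)
    (J : Matrix (Fin k) (Fin k) ℝ)
    (hJtri : ∀ a b : Fin k, (a : ℕ) < (b : ℕ) → J a b = 0)
    (hAZ : ∑ i, A i * Z i = K * J)
    (hZ : ∀ (i : Fin s) (j : Fin k), (∑ r, Z i r j ^ 2) ≤ t i j * w i)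
    (hsum : ∀ j : Fin k, ∑ i, t i j ≤ J j j) :
    (∏ j, J j j) * (Kᵀ * G * K).det ≤ 1 := by
  classical
  set M : Matrix (Fin m) (Fin m) ℝ := ∑ i, w i • (A i * (A i)ᵀ) with hM
  -- diagonal of J is nonnegative
  have hJd : ∀ j, 0 ≤ J j j := fun j =>
    le_trans (Finset.sum_nonneg fun i _ => ht i j) (hsum j)
  -- symmetry of M
  have hMsymm : Mᵀ = M := by
    rw [hM]
    simp [Matrix.transpose_sum, Matrix.transpose_smul, Matrix.transpose_mul,
      Matrix.transpose_transpose]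
  -- quadratic form of M
  have hquad : ∀ u : Fin m → ℝ,
      u ⬝ᵥ (M *ᵥ u) = ∑ i, w i * (∑ r, ((A i)ᵀ *ᵥ u) r ^ 2) := by
    intro u
    rw [hM, aux_sum_mulVec, aux_dotProduct_sum]
    refine Finset.sum_congr rfl fun i _ => ?_
    rw [Matrix.smul_mulVec, dotProduct_smul, ← Matrix.mulVec_mulVec,
      aux_dot_mulVec (A i) u ((A i)ᵀ *ᵥ u)]
    simp only [smul_eq_mul]
    congr 1
    simp [dotProduct, sq]
  -- the matrix H with M * H = K
  choose Hf hHf using hest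
  set H : Matrix (Fin m) (Fin k) ℝ := Matrix.of (fun r j => Hf j r) with hH
  have hMH : M * H = K := by
    ext r j
    have := congrFun (hHf j) r
    simpa [Matrix.mul_apply, Matrix.mulVec, dotProduct, hH] using this
  set N : Matrix (Fin k) (Fin k) ℝ := Hᵀ * M * H with hNdef
  -- K^T G K = N
  have hN : Kᵀ * G * K = N := by
    rw [hNdef, ← hMH, Matrix.transpose_mul, hMsymm]
    calc Hᵀ * M * G * (M * H) = Hᵀ * (M * G * M) * H := by
          simp only [Matrix.mul_assoc]
      _ = Hᵀ * M * H := by rw [hG, Matrix.mul_assoc]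
  -- M is PSD
  have hMPSD : M.PosSemidef := by
    refine Matrix.PosSemidef.of_dotProduct_mulVec_nonneg ?_ ?_
    · rw [Matrix.IsHermitian, Matrix.conjTranspose_eq_transpose_of_trivial, hMsymm]
    · intro x
      rw [star_trivial, hquad]
      exact Finset.sum_nonneg fun i _ =>
        mul_nonneg (hw i) (Finset.sum_nonneg fun r _ => sq_nonneg _)
  -- quadratic form of N
  have hNquad : ∀ y : Fin k → ℝ, y ⬝ᵥ (N *ᵥ y) = (H *ᵥ y) ⬝ᵥ (M *ᵥ (H *ᵥ y)) := by
    intro y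
    rw [hNdef, ← Matrix.mulVec_mulVec, ← Matrix.mulVec_mulVec,
      aux_dot_transpose H y (M *ᵥ (H *ᵥ y))]
  have hNnonneg : ∀ y : Fin k → ℝ, 0 ≤ y ⬝ᵥ (N *ᵥ y) := by
    intro y
    rw [hNquad, hquad]
    exact Finset.sum_nonneg fun i _ =>
      mul_nonneg (hw i) (Finset.sum_nonneg fun r _ => sq_nonneg _)
  -- the columns of J
  set Jc : Fin k → Fin k → ℝ := fun j a => J a j with hJc
  -- the column identity
  have hcol : ∀ j, K *ᵥ (Jc j) = ∑ i, (A i) *ᵥ (fun q => Z i q j) := by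
    intro j
    funext r
    have h1 : (K * J) r j = (∑ i, A i * Z i) r j := by rw [hAZ]
    have h2 : (K *ᵥ (Jc j)) r = (K * J) r j := by
      simp [Matrix.mulVec, Matrix.mul_apply, dotProduct, hJc]
    rw [h2, h1]
    simp [Matrix.mulVec, Matrix.mul_apply, dotProduct, Finset.sum_apply, Matrix.sum_apply]
  -- key quadratic inequality
  have hkey : ∀ (j : Fin k) (y : Fin k → ℝ),
      (y ⬝ᵥ (N *ᵥ Jc j)) ^ 2 ≤ (y ⬝ᵥ (N *ᵥ y)) * J j j := by
    intro j y
    set u : Fin m → ℝ := H *ᵥ y with hu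
    set a : Fin s → ℝ := fun i => Real.sqrt (w i * ∑ r, ((A i)ᵀ *ᵥ u) r ^ 2) with ha
    set b : Fin s → ℝ := fun i => Real.sqrt (t i j) with hb
    have hyN : y ⬝ᵥ (N *ᵥ Jc j) = ∑ i, ((A i)ᵀ *ᵥ u) ⬝ᵥ (fun q => Z i q j) := by
      calc y ⬝ᵥ (N *ᵥ Jc j) = u ⬝ᵥ (M *ᵥ (H *ᵥ Jc j)) := by
            rw [hNdef, ← Matrix.mulVec_mulVec, ← Matrix.mulVec_mulVec,
              aux_dot_transpose H y (M *ᵥ (H *ᵥ Jc j)), hu]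
        _ = u ⬝ᵥ (K *ᵥ Jc j) := by rw [Matrix.mulVec_mulVec, hMH]
        _ = u ⬝ᵥ (∑ i, (A i) *ᵥ (fun q => Z i q j)) := by rw [hcol j]
        _ = ∑ i, u ⬝ᵥ ((A i) *ᵥ (fun q => Z i q j)) := aux_dotProduct_sum _ _ _
        _ = ∑ i, ((A i)ᵀ *ᵥ u) ⬝ᵥ (fun q => Z i q j) := by
            refine Finset.sum_congr rfl fun i _ => ?_
            rw [aux_dot_mulVec (A i) u (fun q => Z i q j)]
    -- per-term bound
    have hterm : ∀ i, |((A i)ᵀ *ᵥ u) ⬝ᵥ (fun q => Z i q j)| ≤ a i * b i := by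
      intro i
      have hcs : (((A i)ᵀ *ᵥ u) ⬝ᵥ (fun q => Z i q j)) ^ 2 ≤
          (∑ r, ((A i)ᵀ *ᵥ u) r ^ 2) * (∑ r, Z i r j ^ 2) := by
        simpa [dotProduct] using
          Finset.sum_mul_sq_le_sq_mul_sq Finset.univ ((A i)ᵀ *ᵥ u) (fun q => Z i q j)
      have hS : 0 ≤ ∑ r, ((A i)ᵀ *ᵥ u) r ^ 2 :=
        Finset.sum_nonneg fun r _ => sq_nonneg _
      have h2 : (((A i)ᵀ *ᵥ u) ⬝ᵥ (fun q => Z i q j)) ^ 2 ≤ (a i * b i) ^ 2 := by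
        have hab : (a i * b i) ^ 2 = (∑ r, ((A i)ᵀ *ᵥ u) r ^ 2) * (t i j * w i) := by
          rw [ha, hb, mul_pow, Real.sq_sqrt (mul_nonneg (hw i) hS),
            Real.sq_sqrt (ht i j)]
          ring
        rw [hab]
        exact le_trans hcs (mul_le_mul_of_nonneg_left (hZ i j) hS)
      have hab0 : 0 ≤ a i * b i := mul_nonneg (Real.sqrt_nonneg _) (Real.sqrt_nonneg _)
      calc |((A i)ᵀ *ᵥ u) ⬝ᵥ (fun q => Z i q j)|
          = Real.sqrt ((((A i)ᵀ *ᵥ u) ⬝ᵥ (fun q => Z i q j)) ^ 2) :=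
            (Real.sqrt_sq_eq_abs _).symm
        _ ≤ Real.sqrt ((a i * b i) ^ 2) := Real.sqrt_le_sqrt h2
        _ = a i * b i := by rw [Real.sqrt_sq hab0]
    have habs : |y ⬝ᵥ (N *ᵥ Jc j)| ≤ ∑ i, a i * b i := by
      rw [hyN]
      exact le_trans (Finset.abs_sum_le_sum_abs _ _)
        (Finset.sum_le_sum fun i _ => hterm i)
    have hsumab0 : 0 ≤ ∑ i, a i * b i :=
      Finset.sum_nonneg fun i _ =>
        mul_nonneg (Real.sqrt_nonneg _) (Real.sqrt_nonneg _)
    have hcs2 : (∑ i, a i * b i) ^ 2 ≤ (∑ i, a i ^ 2) * (∑ i, b i ^ 2) :=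
      Finset.sum_mul_sq_le_sq_mul_sq Finset.univ a b
    have hsa : ∑ i, a i ^ 2 = y ⬝ᵥ (N *ᵥ y) := by
      rw [hNquad, hquad, ← hu]
      refine Finset.sum_congr rfl fun i _ => ?_
      rw [ha, Real.sq_sqrt (mul_nonneg (hw i)
        (Finset.sum_nonneg fun r _ => sq_nonneg _))]
    have hsb : ∑ i, b i ^ 2 ≤ J j j := by
      calc ∑ i, b i ^ 2 = ∑ i, t i j := by
            refine Finset.sum_congr rfl fun i _ => ?_
            rw [hb, Real.sq_sqrt (ht i j)]
        _ ≤ J j j := hsum j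
    calc (y ⬝ᵥ (N *ᵥ Jc j)) ^ 2 = |y ⬝ᵥ (N *ᵥ Jc j)| ^ 2 := (sq_abs _).symm
      _ ≤ (∑ i, a i * b i) ^ 2 := pow_le_pow_left₀ (abs_nonneg _) habs 2
      _ ≤ (∑ i, a i ^ 2) * (∑ i, b i ^ 2) := hcs2
      _ ≤ (y ⬝ᵥ (N *ᵥ y)) * J j j := by
          rw [hsa]
          exact mul_le_mul_of_nonneg_left hsb (hNnonneg y)
  -- diagonal bound p j ≤ J j j
  set p : Fin k → ℝ := fun j => Jc j ⬝ᵥ (N *ᵥ Jc j) with hp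
  have hpJ : ∀ j, p j ≤ J j j := by
    intro j
    have h1 := hkey j (Jc j)
    have h2 : 0 ≤ p j := hNnonneg (Jc j)
    rcases eq_or_lt_of_le h2 with h3 | h3
    · rw [← h3]; exact hJd j
    · nlinarith [h1]
  -- the matrix P = Jᵀ N J
  set P : Matrix (Fin k) (Fin k) ℝ := Jᵀ * N * J with hP
  have hPdiag : ∀ j, P j j = p j := by
    intro j
    rw [hP, hp]
    simp only [Matrix.mul_apply, Matrix.transpose_apply, Matrix.mulVec, dotProduct,
      Finset.sum_mul, Finset.mul_sum, hJc]
    rw [Finset.sum_comm]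
    exact Finset.sum_congr rfl fun x _ => Finset.sum_congr rfl fun y _ => by ring
  have hPpsd : P.PosSemidef := by
    have h1 := hMPSD.conjTranspose_mul_mul_same (H * J)
    have h2 : (H * J)ᴴ * M * (H * J) = P := by
      rw [Matrix.conjTranspose_eq_transpose_of_trivial, Matrix.transpose_mul, hP, hNdef]
      simp only [Matrix.mul_assoc]
    rwa [h2] at h1
  have hdetJ : J.det = ∏ j, J j j := by
    apply Matrix.det_of_lowerTriangular
    intro i j hij
    exact hJtri i j hij
  have hPdet : P.det = (∏ j, J j j) ^ 2 * N.det := by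
    rw [hP, Matrix.det_mul, Matrix.det_mul, Matrix.det_transpose, hdetJ]
    ring
  rw [hN]
  by_cases hall : ∀ j, 0 < J j j
  · have h1 : P.det ≤ ∏ j, J j j :=
      aux_det_le_prod hPpsd (fun j => J j j) hall (fun j => (hPdiag j) ▸ hpJ j)
    have hprodpos : 0 < ∏ j, J j j := Finset.prod_pos fun j _ => hall j
    rw [hPdet] at h1
    nlinarith [h1, hprodpos]
  · push_neg at hall
    obtain ⟨j, hj⟩ := hall
    have : J j j = 0 := le_antisymm hj (hJd j)
    have hz : (∏ j, J j j) = 0 := Finset.prod_eq_zero (Finset.mem_univ j) this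
    rw [hz, zero_mul]
    norm_num
end

section
/- Let A₁,…,A_s be real matrices with Aᵢ of size m × ℓᵢ, let w ∈ ℝ₊ˢ be a nonnegative weight vector, let M(w) = Σᵢ wᵢAᵢAᵢᵀ, let K be an m × k matrix of full column rank with every column of K in the column space of M(w), and let G satisfy M(w)·G·M(w) = M(w). Then there exist matrices Zᵢ ∈ ℝ^{ℓᵢ×k}, scalars tᵢⱼ ≥ 0 and a lower triangular J ∈ ℝ^{k×k} with Σᵢ AᵢZᵢ = KJ, ‖Zᵢeⱼ‖² ≤ tᵢⱼwᵢ for all i,j, Σᵢ tᵢⱼ ≤ Jⱼⱼ for all j, such that (∏ⱼ Jⱼⱼ)·det(KᵀGK) = 1. Consequently the optimal value of this optimization problem equals det C_K(M(w)) = 1/det(KᵀGK), i.e., the k-th root of the optimal value equals the D_K-criterion Φ_{D|K}(M(w)). -/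
set_option maxHeartbeats 1000000

open Matrix

lemma sum_mulVec' {n m : ℕ} {ι : Type*} (f : Finset ι) (M : ι → Matrix (Fin m) (Fin n) ℝ)
    (y : Fin n → ℝ) : (∑ i ∈ f, M i) *ᵥ y = ∑ i ∈ f, M i *ᵥ y := by
  funext r
  simp [mulVec, dotProduct, Matrix.sum_apply, Finset.sum_mul, Finset.sum_apply]
  rw [Finset.sum_comm]

lemma dotProduct_sum' {n : ℕ} {ι : Type*} (f : Finset ι) (v : Fin n → ℝ)
    (u : ι → (Fin n → ℝ)) : v ⬝ᵥ (∑ i ∈ f, u i) = ∑ i ∈ f, v ⬝ᵥ u i := by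
  simp [dotProduct, Finset.mul_sum, Finset.sum_apply]
  rw [Finset.sum_comm]

lemma quadform (s m : ℕ) (ℓ : Fin s → ℕ) (A : (i : Fin s) → Matrix (Fin m) (Fin (ℓ i)) ℝ)
    (w : Fin s → ℝ) (y : Fin m → ℝ) :
    y ⬝ᵥ ((∑ i, w i • (A i * (A i)ᵀ)) *ᵥ y)
      = ∑ i, w i * ∑ r, ((A i)ᵀ *ᵥ y) r ^ 2 := by
  rw [sum_mulVec', dotProduct_sum']
  refine Finset.sum_congr rfl fun i _ => ?_
  rw [smul_mulVec, dotProduct_smul, ← mulVec_mulVec, dotProduct_mulVec,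
    ← mulVec_transpose]
  simp [dotProduct, sq, smul_eq_mul]

lemma conj_apply {m k : ℕ} (X : Matrix (Fin m) (Fin k) ℝ) (N : Matrix (Fin m) (Fin m) ℝ)
    (j : Fin k) : (Xᵀ * N * X) j j = (fun r => X r j) ⬝ᵥ (N *ᵥ fun r => X r j) := by
  simp only [Matrix.mul_apply, mulVec, dotProduct, transpose_apply, Finset.sum_mul,
    Finset.mul_sum]
  rw [Finset.sum_comm]
  exact Finset.sum_congr rfl fun r _ => Finset.sum_congr rfl fun c _ => by ring

lemma mulVec_zero_of_quad {s m : ℕ} {ℓ : Fin s → ℕ}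
    {A : (i : Fin s) → Matrix (Fin m) (Fin (ℓ i)) ℝ} {w : Fin s → ℝ} (hw : ∀ i, 0 ≤ w i)
    {y : Fin m → ℝ} (h : y ⬝ᵥ ((∑ i, w i • (A i * (A i)ᵀ)) *ᵥ y) = 0) :
    (∑ i, w i • (A i * (A i)ᵀ)) *ᵥ y = 0 := by
  rw [quadform] at h
  have hz : ∀ i : Fin s, w i • ((A i)ᵀ *ᵥ y) = 0 := by
    intro i
    have hnn : ∀ i ∈ Finset.univ, 0 ≤ w i * ∑ r, ((A i)ᵀ *ᵥ y) r ^ 2 := fun i _ =>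
      mul_nonneg (hw i) (Finset.sum_nonneg fun r _ => sq_nonneg _)
    have := (Finset.sum_eq_zero_iff_of_nonneg hnn).mp h i (Finset.mem_univ i)
    rcases mul_eq_zero.mp this with h0 | h0
    · rw [h0, zero_smul]
    · have : ∀ r, ((A i)ᵀ *ᵥ y) r = 0 := by
        intro r
        have := (Finset.sum_eq_zero_iff_of_nonneg (fun r _ => sq_nonneg _)).mp h0 r
          (Finset.mem_univ r)
        exact pow_eq_zero_iff (two_ne_zero) |>.mp this
      have h1 : (A i)ᵀ *ᵥ y = 0 := funext this
      rw [h1, smul_zero]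
  rw [sum_mulVec']
  refine Finset.sum_eq_zero fun i _ => ?_
  rw [smul_mulVec, ← mulVec_mulVec, ← mulVec_smul, hz i, mulVec_zero]

/-- Attainment in the SOCP characterization of the `D_K`-criterion: there is a feasible
point `(Zᵢ, tᵢⱼ, J)` with `(∏ⱼ Jⱼⱼ) · det(KᵀGK) = 1`, so the optimal value of the SOCP
equals `det C_K(M(w)) = 1/det(KᵀGK)`. -/
theorem stmt_8 (s m k : ℕ) (ℓ : Fin s → ℕ)
    (A : (i : Fin s) → Matrix (Fin m) (Fin (ℓ i)) ℝ)
    (w : Fin s → ℝ) (hw : ∀ i, 0 ≤ w i)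
    (K : Matrix (Fin m) (Fin k) ℝ) (hK : K.rank = k) (hk : k ≤ m)
    (hest : ∀ j : Fin k, ∃ v : Fin m → ℝ,
      (∑ i, w i • (A i * (A i)ᵀ)) *ᵥ v = fun r => K r j)
    (G : Matrix (Fin m) (Fin m) ℝ)
    (hG : (∑ i, w i • (A i * (A i)ᵀ)) * G * (∑ i, w i • (A i * (A i)ᵀ)) =
      ∑ i, w i • (A i * (A i)ᵀ)) :
    ∃ (Z : (i : Fin s) → Matrix (Fin (ℓ i)) (Fin k) ℝ)
      (t : Fin s → Fin k → ℝ) (J : Matrix (Fin k) (Fin k) ℝ),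
      (∀ i j, 0 ≤ t i j) ∧
      (∀ a b : Fin k, (a : ℕ) < (b : ℕ) → J a b = 0) ∧
      (∑ i, A i * Z i = K * J) ∧
      (∀ (i : Fin s) (j : Fin k), (∑ r, Z i r j ^ 2) ≤ t i j * w i) ∧
      (∀ j : Fin k, ∑ i, t i j ≤ J j j) ∧
      (∏ j, J j j) * (Kᵀ * G * K).det = 1 := by
  set M : Matrix (Fin m) (Fin m) ℝ := ∑ i, w i • (A i * (A i)ᵀ) with hMdef
  -- U with M * U = K
  set U : Matrix (Fin m) (Fin k) ℝ := Matrix.of fun r j => (hest j).choose r with hUdef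
  have hMU : M * U = K := by
    ext r j
    have := congrFun (hest j).choose_spec r
    simpa [Matrix.mul_apply, mulVec, dotProduct, hUdef] using this
  -- M is symmetric
  have hMsymm : Mᵀ = M := by
    rw [hMdef, transpose_sum]
    exact Finset.sum_congr rfl fun i _ => by
      rw [transpose_smul, transpose_mul, transpose_transpose]
  -- B = Kᵀ G K = Uᵀ M U
  have hB : Kᵀ * G * K = Uᵀ * M * U := by
    rw [← hMU, transpose_mul, hMsymm]
    calc Uᵀ * M * G * (M * U) = Uᵀ * (M * G * M) * U := by
          simp only [Matrix.mul_assoc]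
      _ = Uᵀ * M * U := by rw [hG, Matrix.mul_assoc]
  -- K is injective
  have hKinj : ∀ x : Fin k → ℝ, K *ᵥ x = 0 → x = 0 := by
    intro x hx
    have h1 := K.mulVecLin.finrank_range_add_finrank_ker
    rw [show Module.finrank ℝ (LinearMap.range K.mulVecLin) = k from hK,
      Module.finrank_fin_fun] at h1
    have h2 : Module.finrank ℝ (LinearMap.ker K.mulVecLin) = 0 := by omega
    have h3 : LinearMap.ker K.mulVecLin = ⊥ := Submodule.finrank_eq_zero.mp h2
    have h4 : x ∈ LinearMap.ker K.mulVecLin := by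
      simpa [LinearMap.mem_ker, Matrix.mulVecLin_apply] using hx
    rw [h3] at h4
    simpa using h4
  -- B is positive definite
  have hquad : ∀ x : Fin k → ℝ,
      x ⬝ᵥ ((Kᵀ * G * K) *ᵥ x) = (U *ᵥ x) ⬝ᵥ (M *ᵥ (U *ᵥ x)) := by
    intro x
    rw [hB, ← mulVec_mulVec, ← mulVec_mulVec, dotProduct_mulVec, vecMul_transpose]
  have hBpd : (Kᵀ * G * K).PosDef := by
    have hsym : (Uᵀ * M * U)ᵀ = Uᵀ * M * U := by
      rw [transpose_mul, transpose_mul, transpose_transpose, hMsymm, Matrix.mul_assoc]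
    rw [posDef_iff_dotProduct_mulVec]
    constructor
    · rw [hB]
      ext a b
      simpa [conjTranspose_apply] using congrFun (congrFun hsym a) b
    · intro x hx
      have hstar : star x = x := by simp
      rw [hstar, hquad]
      have hge : 0 ≤ (U *ᵥ x) ⬝ᵥ (M *ᵥ (U *ᵥ x)) := by
        rw [hMdef, quadform]
        exact Finset.sum_nonneg fun i _ =>
          mul_nonneg (hw i) (Finset.sum_nonneg fun r _ => sq_nonneg _)
      rcases hge.lt_or_eq with h | h
      · exact h
      · exfalso
        apply hx
        apply hKinj
        have h0 : M *ᵥ (U *ᵥ x) = 0 := by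
          apply mulVec_zero_of_quad hw
          rw [← hMdef]; exact h.symm
        rw [← hMU, ← mulVec_mulVec, h0]
  -- LDL decomposition of the inverse
  have hdetB : IsUnit (Kᵀ * G * K).det := isUnit_iff_ne_zero.mpr (ne_of_gt hBpd.det_pos)
  have hSpd : ((Kᵀ * G * K)⁻¹).PosDef := hBpd.inv
  haveI : WellFoundedLT (Fin k) := inferInstance
  set L : Matrix (Fin k) (Fin k) ℝ := LDL.lower hSpd with hLdef
  set d : Fin k → ℝ := LDL.diagEntries hSpd with hddef
  have hDdiag : LDL.diag hSpd = Matrix.diagonal d := by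
    ext i j
    by_cases hij : i = j <;> simp [LDL.diag, hddef, hij]
  have hLH : (LDL.lower hSpd)ᴴ = Lᵀ := by
    ext a b; simp [conjTranspose_apply, hLdef]
  have hLDL : L * Matrix.diagonal d * Lᵀ = (Kᵀ * G * K)⁻¹ := by
    rw [← hLH, ← hDdiag, hLdef]
    exact LDL.lower_conj_diag hSpd
  have hLeq : L = (LDL.lowerInv hSpd)⁻¹ := by
    rw [hLdef, LDL.lower]
  have hLTri : L.BlockTriangular OrderDual.toDual := by
    haveI : Invertible (LDL.lowerInv hSpd) := by
      convert LDL.invertibleLowerInv hSpd using 2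
    rw [hLeq]
    exact blockTriangular_inv_of_blockTriangular
      (fun i j hij => LDL.lowerInv_triangular hSpd hij)
  -- the key identity B * (L D Lᵀ) = 1
  have hone : (Kᵀ * G * K) * (L * Matrix.diagonal d * Lᵀ) = 1 := by
    rw [hLDL, Matrix.mul_nonsing_inv _ hdetB]
  -- X := Lᵀ B L satisfies X * D = 1
  set X : Matrix (Fin k) (Fin k) ℝ := Lᵀ * (Kᵀ * G * K) * L with hXdef
  have hXD : X * Matrix.diagonal d = 1 := by
    have h1 : ((Kᵀ * G * K) * L * Matrix.diagonal d) * Lᵀ = 1 := by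
      rw [← hone]; simp only [Matrix.mul_assoc]
    have h2 : (Lᵀ)⁻¹ = (Kᵀ * G * K) * L * Matrix.diagonal d :=
      Matrix.inv_eq_left_inv h1
    have h3 : Lᵀ * (Lᵀ)⁻¹ = 1 := by
      apply Matrix.mul_nonsing_inv
      rw [Matrix.det_transpose]
      have hd := congrArg Matrix.det hone
      rw [Matrix.det_mul, Matrix.det_mul, Matrix.det_mul, Matrix.det_one,
        Matrix.det_transpose] at hd
      exact IsUnit.of_mul_eq_one ((Kᵀ * G * K).det * ((Matrix.diagonal d).det * L.det))
        (by linear_combination hd)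
    rw [h2] at h3
    rw [hXdef]
    rw [← h3]; simp only [Matrix.mul_assoc]
  have hXDentry : ∀ j : Fin k, X j j * d j = 1 := by
    intro j
    have := congrFun (congrFun hXD j) j
    rwa [Matrix.mul_diagonal, Matrix.one_apply_eq] at this
  -- definitions of J, Z, t
  set e : Fin k → ℝ := fun j => L j j * d j with hedef
  set J : Matrix (Fin k) (Fin k) ℝ := L * Matrix.diagonal e with hJdef
  set Y : Matrix (Fin m) (Fin k) ℝ := U * J with hYdef
  refine ⟨fun i => w i • ((A i)ᵀ * Y),
    fun i j => w i * ∑ r, ((A i)ᵀ * Y) r j ^ 2, J, ?_, ?_, ?_, ?_, ?_, ?_⟩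
  · intro i j
    exact mul_nonneg (hw i) (Finset.sum_nonneg fun r _ => sq_nonneg _)
  · intro a b hab
    rw [hJdef, Matrix.mul_diagonal, hLTri (show OrderDual.toDual b < OrderDual.toDual a from hab),
      zero_mul]
  · calc ∑ i, A i * (w i • ((A i)ᵀ * Y))
        = ∑ i, (w i • (A i * (A i)ᵀ)) * Y := by
          refine Finset.sum_congr rfl fun i _ => ?_
          rw [Matrix.mul_smul, Matrix.smul_mul, Matrix.mul_assoc]
      _ = M * Y := by rw [hMdef, Matrix.sum_mul]
      _ = K * J := by rw [hYdef, ← Matrix.mul_assoc, hMU]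
  · intro i j
    simp only [Matrix.smul_apply, smul_eq_mul]
    rw [Finset.mul_sum, Finset.sum_mul]
    exact le_of_eq (Finset.sum_congr rfl fun r _ => by ring)
  · intro j
    -- column of Y
    set y : Fin m → ℝ := fun r => Y r j with hydef
    have hcol : ∀ i : Fin s, ∀ r, ((A i)ᵀ * Y) r j = ((A i)ᵀ *ᵥ y) r := by
      intro i r
      simp [Matrix.mul_apply, mulVec, dotProduct, hydef]
    have hsum : ∑ i, w i * ∑ r, ((A i)ᵀ * Y) r j ^ 2 = (Yᵀ * M * Y) j j := by
      rw [conj_apply]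
      rw [hMdef, quadform]
      exact Finset.sum_congr rfl fun i _ => by
        rw [Finset.mul_sum, Finset.mul_sum]
        exact Finset.sum_congr rfl fun r _ => by rw [hcol]
    rw [hsum]
    have hYMY : Yᵀ * M * Y = Jᵀ * (Kᵀ * G * K) * J := by
      rw [hYdef, transpose_mul, hB]
      simp only [Matrix.mul_assoc]
    have hJT : Jᵀ = Matrix.diagonal e * Lᵀ := by
      rw [hJdef, transpose_mul, diagonal_transpose]
    have hentry : (Jᵀ * (Kᵀ * G * K) * J) j j = J j j := by
      have : Jᵀ * (Kᵀ * G * K) * J = Matrix.diagonal e * X * Matrix.diagonal e := by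
        rw [hJT, hXdef, hJdef]
        simp only [Matrix.mul_assoc]
      rw [this, Matrix.mul_diagonal, Matrix.diagonal_mul, hJdef, Matrix.mul_diagonal]
      have h4 : e j * X j j * e j = L j j * e j * (X j j * d j) := by
        rw [hedef]; ring
      rw [h4, hXDentry, mul_one]
    rw [hYMY, hentry]
  · have hprod : ∏ j, J j j = ∏ j, (L j j * e j) := by
      refine Finset.prod_congr rfl fun j _ => ?_
      rw [hJdef, Matrix.mul_diagonal]
    have hdetLDL : (L * Matrix.diagonal d * Lᵀ).det = ∏ j, (L j j * e j) := by
      rw [Matrix.det_mul, Matrix.det_mul, Matrix.det_transpose,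
        Matrix.det_of_lowerTriangular L hLTri, Matrix.det_diagonal]
      rw [← Finset.prod_mul_distrib, ← Finset.prod_mul_distrib]
      exact Finset.prod_congr rfl fun j _ => by rw [hedef]; ring
    have := congrArg Matrix.det hone
    rw [Matrix.det_mul, hdetLDL, Matrix.det_one] at this
    rw [hprod, mul_comm]
    exact this
end

section
/- Let A₁,…,A_s be real matrices with Aᵢ of size m × ℓᵢ, let w ∈ ℝ₊ˢ, let K be an m × k matrix, and let H be the m × (ℓ₁+…+ℓ_s) matrix obtained by horizontally concatenating the blocks √w₁A₁, …, √w_sA_s. Suppose Zᵢ ∈ ℝ^{ℓᵢ×k}, tᵢⱼ ≥ 0, and a lower triangular J ∈ ℝ^{k×k} satisfy Σᵢ AᵢZᵢ = KJ, ‖Zᵢeⱼ‖² ≤ tᵢⱼwᵢ for all i ∈ {1,…,s}, j ∈ {1,…,k}, and Σᵢ tᵢⱼ ≤ Jⱼⱼ for all j. Then there exist Q ∈ ℝ^{(ℓ₁+…+ℓ_s)×k} and a lower triangular L ∈ ℝ^{k×k} such that HQ = KL, every column of Q has Euclidean norm at most 1, and Jⱼⱼ = Lⱼⱼ² for all j ∈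 {1,…,k}; in particular det J = (det L)². -/
open Matrix

/-- Change of variables in the proof of Theorem `det_socr`: a feasible point
`(Zᵢ, tᵢⱼ, J)` of the SOCP yields a feasible pair `(Q, L)` for the problem with
`H = [√w₁A₁, …, √w_sA_s]`, with `Jⱼⱼ = Lⱼⱼ²` for all `j`, hence `det J = (det L)²`. -/
theorem stmt_9 (s m k : ℕ) (ℓ : Fin s → ℕ)
    (A : (i : Fin s) → Matrix (Fin m) (Fin (ℓ i)) ℝ)
    (w : Fin s → ℝ) (hw : ∀ i, 0 ≤ w i)
    (K : Matrix (Fin m) (Fin k) ℝ)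
    (H : Matrix (Fin m) ((i : Fin s) × Fin (ℓ i)) ℝ)
    (hH : ∀ (r : Fin m) (p : (i : Fin s) × Fin (ℓ i)),
      H r p = Real.sqrt (w p.1) * A p.1 r p.2)
    (Z : (i : Fin s) → Matrix (Fin (ℓ i)) (Fin k) ℝ)
    (t : Fin s → Fin k → ℝ) (ht : ∀ i j, 0 ≤ t i j)
    (J : Matrix (Fin k) (Fin k) ℝ)
    (hJtri : ∀ a b : Fin k, (a : ℕ) < (b : ℕ) → J a b = 0)
    (hAZ : ∑ i, A i * Z i = K * J)
    (hZ : ∀ (i : Fin s) (j : Fin k), (∑ r, Z i r j ^ 2) ≤ t i j * w i)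
    (hsum : ∀ j : Fin k, ∑ i, t i j ≤ J j j) :
    ∃ (Q : Matrix ((i : Fin s) × Fin (ℓ i)) (Fin k) ℝ)
      (L : Matrix (Fin k) (Fin k) ℝ),
      (∀ a b : Fin k, (a : ℕ) < (b : ℕ) → L a b = 0) ∧
      H * Q = K * L ∧
      (∀ j : Fin k, Real.sqrt (∑ p, Q p j ^ 2) ≤ 1) ∧
      (∀ j : Fin k, J j j = L j j ^ 2) ∧
      J.det = L.det ^ 2 := by
  have hJd : ∀ j, 0 ≤ J j j := fun j =>
    le_trans (Finset.sum_nonneg fun i _ => ht i j) (hsum j)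
  -- t vanishes when J j j = 0
  have ht0 : ∀ i j, J j j = 0 → t i j = 0 := by
    intro i j hj
    have h1 : ∑ i, t i j ≤ 0 := by rw [← hj]; exact hsum j
    have h2 : (0:ℝ) ≤ ∑ i, t i j := Finset.sum_nonneg fun i _ => ht i j
    have := (Finset.sum_eq_zero_iff_of_nonneg (fun i _ => ht i j)).mp (le_antisymm h1 h2)
    exact this i (Finset.mem_univ i)
  -- Z columns vanish when w i = 0 or J j j = 0
  have hZ0 : ∀ i j, (w i = 0 ∨ J j j = 0) → ∀ r, Z i r j = 0 := by
    intro i j h r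
    have hb : (∑ r, Z i r j ^ 2) ≤ 0 := by
      rcases h with h | h
      · simpa [h] using hZ i j
      · simpa [ht0 i j h] using hZ i j
    have h2 : (0:ℝ) ≤ ∑ r, Z i r j ^ 2 := Finset.sum_nonneg fun r _ => sq_nonneg _
    have := (Finset.sum_eq_zero_iff_of_nonneg
      (fun r (_ : r ∈ Finset.univ) => sq_nonneg (Z i r j))).mp (le_antisymm hb h2)
    exact pow_eq_zero_iff (n := 2) (by norm_num) |>.mp (this r (Finset.mem_univ r))
  refine ⟨fun p j => Z p.1 p.2 j / (Real.sqrt (w p.1) * Real.sqrt (J j j)),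
    fun a b => J a b / Real.sqrt (J b b), ?_, ?_, ?_, ?_, ?_⟩
  · intro a b hab
    simp [hJtri a b hab]
  · ext r j
    show ∑ p, H r p * (Z p.1 p.2 j / (Real.sqrt (w p.1) * Real.sqrt (J j j)))
      = ∑ a, K r a * (J a j / Real.sqrt (J j j))
    have hterm : ∀ p : (i : Fin s) × Fin (ℓ i),
        H r p * (Z p.1 p.2 j / (Real.sqrt (w p.1) * Real.sqrt (J j j)))
          = A p.1 r p.2 * Z p.1 p.2 j / Real.sqrt (J j j) := by
      intro p
      rw [hH r p]
      by_cases hwp : w p.1 = 0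
      · simp [hZ0 p.1 j (Or.inl hwp) p.2]
      · have hs : Real.sqrt (w p.1) ≠ 0 := Real.sqrt_ne_zero'.mpr
          (lt_of_le_of_ne (hw p.1) (Ne.symm hwp))
        rw [show Real.sqrt (w p.1) * A p.1 r p.2 *
            (Z p.1 p.2 j / (Real.sqrt (w p.1) * Real.sqrt (J j j)))
            = (Real.sqrt (w p.1) / Real.sqrt (w p.1)) *
              (A p.1 r p.2 * Z p.1 p.2 j / Real.sqrt (J j j)) by ring,
          div_self hs, one_mul]
    rw [Finset.sum_congr rfl fun p _ => hterm p]
    rw [← Finset.univ_sigma_univ, Finset.sum_sigma]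
    have hL : ∑ i, ∑ r' : Fin (ℓ i), A i r r' * Z i r' j / Real.sqrt (J j j)
        = (∑ i, (A i * Z i)) r j / Real.sqrt (J j j) := by
      calc ∑ i, ∑ r' : Fin (ℓ i), A i r r' * Z i r' j / Real.sqrt (J j j)
          = ∑ i, (A i * Z i) r j / Real.sqrt (J j j) :=
            Finset.sum_congr rfl fun i _ => by
              rw [← Finset.sum_div, Matrix.mul_apply]
        _ = (∑ i, (A i * Z i) r j) / Real.sqrt (J j j) := (Finset.sum_div _ _ _).symm
        _ = (∑ i, (A i * Z i)) r j / Real.sqrt (J j j) := by rw [Matrix.sum_apply]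
    calc ∑ i, ∑ r' : Fin (ℓ i), A i r r' * Z i r' j / Real.sqrt (J j j)
        = (∑ i, (A i * Z i)) r j / Real.sqrt (J j j) := hL
      _ = (K * J) r j / Real.sqrt (J j j) := by rw [hAZ]
      _ = ∑ a, K r a * (J a j / Real.sqrt (J j j)) := by
          rw [Matrix.mul_apply, Finset.sum_div]
          exact Finset.sum_congr rfl fun a _ => (mul_div_assoc _ _ _)
  · intro j
    by_cases hj : J j j = 0
    · have : ∀ p : (i : Fin s) × Fin (ℓ i),
          Z p.1 p.2 j / (Real.sqrt (w p.1) * Real.sqrt (J j j)) = 0 := by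
        intro p; simp [hZ0 p.1 j (Or.inr hj) p.2]
      simp only [this]
      simp
    · have hjpos : 0 < J j j := lt_of_le_of_ne (hJd j) (Ne.symm hj)
      have hsum1 : (∑ p : (i : Fin s) × Fin (ℓ i),
          (Z p.1 p.2 j / (Real.sqrt (w p.1) * Real.sqrt (J j j))) ^ 2) ≤ 1 := by
        have hsq : ∀ p : (i : Fin s) × Fin (ℓ i),
            (Z p.1 p.2 j / (Real.sqrt (w p.1) * Real.sqrt (J j j))) ^ 2
              = Z p.1 p.2 j ^ 2 / (w p.1 * J j j) := by
          intro p
          rw [div_pow, mul_pow, Real.sq_sqrt (hw p.1), Real.sq_sqrt (hJd j)]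
        rw [Finset.sum_congr rfl fun p _ => hsq p]
        rw [← Finset.univ_sigma_univ, Finset.sum_sigma]
        have hinner : ∀ i, (∑ r' : Fin (ℓ i), Z i r' j ^ 2 / (w i * J j j))
            ≤ t i j / J j j := by
          intro i
          by_cases hwi : w i = 0
          · have : ∀ r', Z i r' j ^ 2 / (w i * J j j) = 0 := by
              intro r'; simp [hZ0 i j (Or.inl hwi) r']
            rw [Finset.sum_congr rfl fun r' _ => this r']
            simp only [Finset.sum_const, smul_zero]
            exact div_nonneg (ht i j) (le_of_lt hjpos)
          · have hwpos : 0 < w i := lt_of_le_of_ne (hw i) (Ne.symm hwi)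
            rw [← Finset.sum_div]
            rw [div_le_div_iff₀ (by positivity) hjpos]
            calc (∑ r' : Fin (ℓ i), Z i r' j ^ 2) * J j j
                ≤ t i j * w i * J j j :=
                  mul_le_mul_of_nonneg_right (hZ i j) (le_of_lt hjpos)
              _ = t i j * (w i * J j j) := by ring
          
        calc (∑ i, ∑ r' : Fin (ℓ i), Z i r' j ^ 2 / (w i * J j j))
            ≤ ∑ i, t i j / J j j := Finset.sum_le_sum fun i _ => hinner i
          _ = (∑ i, t i j) / J j j := by rw [Finset.sum_div]
          _ ≤ J j j / J j j :=
              div_le_div_of_nonneg_right (hsum j) (le_of_lt hjpos)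
          _ = 1 := div_self hj
      calc Real.sqrt (∑ p : (i : Fin s) × Fin (ℓ i),
            (Z p.1 p.2 j / (Real.sqrt (w p.1) * Real.sqrt (J j j))) ^ 2)
          ≤ Real.sqrt 1 := Real.sqrt_le_sqrt hsum1
        _ = 1 := Real.sqrt_one
  · intro j
    show J j j = (J j j / Real.sqrt (J j j)) ^ 2
    rw [Real.div_sqrt, Real.sq_sqrt (hJd j)]
  · have hLdiag : ∀ j, J j j / Real.sqrt (J j j) = Real.sqrt (J j j) :=
      fun j => Real.div_sqrt
    rw [Matrix.det_of_lowerTriangular J (fun a b hab => hJtri a b hab),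
        Matrix.det_of_lowerTriangular _ (fun a b hab => by
          simp [hJtri a b hab] : ∀ (a b : Fin k), a < b →
            (fun a b => J a b / Real.sqrt (J b b) : Matrix (Fin k) (Fin k) ℝ) a b = 0)]
    rw [← Finset.prod_pow]
    exact Finset.prod_congr rfl fun j _ => by
      rw [hLdiag j, Real.sq_sqrt (hJd j)]
end

section
/- Let A₁,…,A_s be real matrices with Aᵢ of size m × ℓᵢ, let w ∈ ℝ₊ˢ, let K be an m × k matrix, and let H be the m × (ℓ₁+…+ℓ_s) matrix obtained by horizontally concatenating the blocks √w₁A₁, …, √w_sA_s. Suppose Q ∈ ℝ^{(ℓ₁+…+ℓ_s)×k} and a lower triangular L ∈ ℝ^{k×k} satisfy HQ = KL and every column of Q has Euclidean norm at most 1. Then there exist matrices Zᵢ ∈ ℝ^{ℓᵢ×k}, scalars tᵢⱼ ≥ 0 and a lower triangular J ∈ ℝ^{k×k} such that Σᵢ AᵢZᵢ = KJ, ‖Zᵢeⱼ‖² ≤ tᵢⱼwᵢ for all i,j, Σᵢ tᵢⱼ ≤ Jⱼⱼ for all j, and Jⱼⱼ = Lⱼⱼ² for all j ∈ {1,…,k};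 in particular det J = (det L)². -/
open Matrix

/-- Converse change of variables in the proof of Theorem `det_socr`: a feasible pair
`(Q, L)` for the problem with `H = [√w₁A₁, …, √w_sA_s]` yields a feasible point
`(Zᵢ, tᵢⱼ, J)` of the SOCP with `Jⱼⱼ = Lⱼⱼ²` for all `j`, hence `det J = (det L)²`. -/
theorem stmt_10 (s m k : ℕ) (ℓ : Fin s → ℕ)
    (A : (i : Fin s) → Matrix (Fin m) (Fin (ℓ i)) ℝ)
    (w : Fin s → ℝ) (hw : ∀ i, 0 ≤ w i)
    (K : Matrix (Fin m) (Fin k) ℝ)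
    (H : Matrix (Fin m) ((i : Fin s) × Fin (ℓ i)) ℝ)
    (hH : ∀ (r : Fin m) (p : (i : Fin s) × Fin (ℓ i)),
      H r p = Real.sqrt (w p.1) * A p.1 r p.2)
    (Q : Matrix ((i : Fin s) × Fin (ℓ i)) (Fin k) ℝ)
    (L : Matrix (Fin k) (Fin k) ℝ)
    (hLtri : ∀ a b : Fin k, (a : ℕ) < (b : ℕ) → L a b = 0)
    (hHQ : H * Q = K * L)
    (hQ : ∀ j : Fin k, Real.sqrt (∑ p, Q p j ^ 2) ≤ 1) :
    ∃ (Z : (i : Fin s) → Matrix (Fin (ℓ i)) (Fin k) ℝ)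
      (t : Fin s → Fin k → ℝ) (J : Matrix (Fin k) (Fin k) ℝ),
      (∀ i j, 0 ≤ t i j) ∧
      (∀ a b : Fin k, (a : ℕ) < (b : ℕ) → J a b = 0) ∧
      (∑ i, A i * Z i = K * J) ∧
      (∀ (i : Fin s) (j : Fin k), (∑ r, Z i r j ^ 2) ≤ t i j * w i) ∧
      (∀ j : Fin k, ∑ i, t i j ≤ J j j) ∧
      (∀ j : Fin k, J j j = L j j ^ 2) ∧
      J.det = L.det ^ 2 := by
  refine ⟨fun i => Matrix.of fun r j => Real.sqrt (w i) * Q ⟨i, r⟩ j * L j j,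
    fun i j => (∑ r, Q ⟨i, r⟩ j ^ 2) * L j j ^ 2,
    L * Matrix.diagonal (fun j => L j j), ?_, ?_, ?_, ?_, ?_, ?_, ?_⟩
  · intro i j
    exact mul_nonneg (Finset.sum_nonneg fun r _ => sq_nonneg _) (sq_nonneg _)
  · intro a b hab
    simp [Matrix.mul_diagonal, hLtri a b hab]
  · ext r j
    have h1 : (H * Q) r j = (K * L) r j := by rw [hHQ]
    simp only [Matrix.mul_apply] at h1 ⊢
    have : ∀ i : Fin s, (∑ x, A i r x * (Real.sqrt (w i) * Q ⟨i, x⟩ j * L j j))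
        = ∑ x, H r ⟨i, x⟩ * Q ⟨i, x⟩ j * L j j := by
      intro i
      refine Finset.sum_congr rfl fun x _ => ?_
      rw [hH]; ring
    simp only [Matrix.sum_apply, Matrix.mul_apply, Matrix.of_apply]
    rw [Finset.sum_congr rfl fun i _ => this i,
      ← Finset.sum_sigma Finset.univ (fun _ => Finset.univ)
        (fun (p : (i : Fin s) × Fin (ℓ i)) => H r p * Q p j * L j j),
      Finset.univ_sigma_univ, ← Finset.sum_mul, h1]
    simp [Matrix.diagonal, Finset.sum_mul, mul_assoc]
  · intro i j
    have : ∀ r : Fin (ℓ i), (Real.sqrt (w i) * Q ⟨i, r⟩ j * L j j) ^ 2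
        = w i * (Q ⟨i, r⟩ j ^ 2 * L j j ^ 2) := by
      intro r
      rw [mul_pow, mul_pow, Real.sq_sqrt (hw i)]; ring
    simp only [Matrix.of_apply]
    rw [Finset.sum_congr rfl fun r _ => this r, ← Finset.mul_sum, ← Finset.sum_mul]
    ring_nf
    exact le_rfl
  · intro j
    have hQ1 : (∑ p, Q p j ^ 2) ≤ 1 := by
      have h0 : 0 ≤ ∑ p, Q p j ^ 2 := Finset.sum_nonneg fun p _ => sq_nonneg _
      nlinarith [hQ j, Real.sq_sqrt h0, Real.sqrt_nonneg (∑ p, Q p j ^ 2)]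
    rw [← Finset.sum_mul,
      ← Finset.sum_sigma Finset.univ (fun _ => Finset.univ)
        (fun (p : (i : Fin s) × Fin (ℓ i)) => Q p j ^ 2),
      Finset.univ_sigma_univ]
    have : (L * Matrix.diagonal fun j => L j j) j j = L j j ^ 2 := by
      simp [Matrix.mul_diagonal, sq]
    rw [this]
    nlinarith [sq_nonneg (L j j)]
  · intro j
    simp [Matrix.mul_diagonal, sq]
  · have hdL : L.det = ∏ j, L j j := by
      apply Matrix.det_of_lowerTriangular
      intro a b hab
      exact hLtri a b hab
    rw [Matrix.det_mul, Matrix.det_diagonal, hdL, sq]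
end

section
/- Let A₁,…,A_s be real matrices with Aᵢ of size m × ℓᵢ, let w ∈ ℝ₊ˢ, let M(w) = Σᵢ wᵢAᵢAᵢᵀ, let K be an m × k matrix such that every column of K lies in the column space of M(w), and let G satisfy M(w)·G·M(w) = M(w). Then for all matrices Yᵢ ∈ ℝ^{ℓᵢ×k} and all scalars μᵢ ≥ 0 (i = 1,…,s) satisfying Σᵢ AᵢYᵢ = K and ‖Yᵢ‖_F² ≤ wᵢμᵢ for all i, one has trace(KᵀGK) ≤ Σᵢ μᵢ. -/
open Matrix

lemma aux_trace_transpose_mul {n p : ℕ} (X Z : Matrix (Fin n) (Fin p) ℝ) :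
    (Xᵀ * Z).trace = ∑ r, ∑ c, X r c * Z r c := by
  simp only [Matrix.trace, Matrix.diag, Matrix.mul_apply, Matrix.transpose_apply]
  exact Finset.sum_comm

lemma aux_cs {n p : ℕ} (X Z : Matrix (Fin n) (Fin p) ℝ) :
    (∑ r, ∑ c, X r c * Z r c) ^ 2
      ≤ (∑ r, ∑ c, X r c ^ 2) * (∑ r, ∑ c, Z r c ^ 2) := by
  have := Finset.sum_mul_sq_le_sq_mul_sq Finset.univ
    (fun q : Fin n × Fin p => X q.1 q.2) (fun q : Fin n × Fin p => Z q.1 q.2)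
  simpa [Fintype.sum_prod_type] using this

lemma aux_scalar (a t wi mi b : ℝ) (ha : 0 ≤ a) (hw : 0 ≤ wi) (hm : 0 ≤ mi)
    (hcs : t ^ 2 ≤ a * b) (hb : b ≤ wi * mi) : 2 * t ≤ wi * a + mi := by
  have h1 : t ^ 2 ≤ a * (wi * mi) := hcs.trans (by nlinarith)
  rcases le_or_gt t 0 with ht | ht
  · nlinarith [mul_nonneg hw ha]
  · have hpos : 0 < wi * a + mi + 2 * t := by nlinarith [mul_nonneg hw ha]
    nlinarith [sq_nonneg (wi * a - mi), h1, hpos]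

/-- Weak duality part of the SOCP characterization of `trace(KᵀM(w)⁻K)`
(Proposition on `A_K`-optimality): every feasible point `(Yᵢ, μᵢ)` satisfies
`trace(KᵀGK) ≤ Σᵢ μᵢ`. -/
theorem stmt_11 (s m k : ℕ) (ℓ : Fin s → ℕ)
    (A : (i : Fin s) → Matrix (Fin m) (Fin (ℓ i)) ℝ)
    (w : Fin s → ℝ) (hw : ∀ i, 0 ≤ w i)
    (K : Matrix (Fin m) (Fin k) ℝ)
    (hest : ∀ j : Fin k, ∃ v : Fin m → ℝ,
      (∑ i, w i • (A i * (A i)ᵀ)) *ᵥ v = fun r => K r j)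
    (G : Matrix (Fin m) (Fin m) ℝ)
    (hG : (∑ i, w i • (A i * (A i)ᵀ)) * G * (∑ i, w i • (A i * (A i)ᵀ)) =
      ∑ i, w i • (A i * (A i)ᵀ))
    (Y : (i : Fin s) → Matrix (Fin (ℓ i)) (Fin k) ℝ)
    (μ : Fin s → ℝ) (hμ : ∀ i, 0 ≤ μ i)
    (hAY : ∑ i, A i * Y i = K)
    (hY : ∀ i : Fin s, (∑ r, ∑ c, Y i r c ^ 2) ≤ w i * μ i) :
    (Kᵀ * G * K).trace ≤ ∑ i, μ i := by
  set M : Matrix (Fin m) (Fin m) ℝ := ∑ i, w i • (A i * (A i)ᵀ) with hMdef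
  choose v hv using hest
  set H : Matrix (Fin m) (Fin k) ℝ := fun r j => v j r with hHdef
  have hMH : M * H = K := by
    ext r j
    have := congrFun (hv j) r
    exact (by simpa [Matrix.mulVec, dotProduct] using this : ∑ x, M r x * v j x = K r j)
  have hMsymm : Mᵀ = M := by
    simp [hMdef, Matrix.transpose_sum, Matrix.transpose_smul, Matrix.transpose_mul,
      Matrix.mul_assoc]
  -- the matrices Xᵢ = Aᵢᵀ H
  set X : (i : Fin s) → Matrix (Fin (ℓ i)) (Fin k) ℝ := fun i => (A i)ᵀ * H with hXdef
  -- trace(KᵀGK) = trace(Hᵀ(MH))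
  have hKGK : (Kᵀ * G * K).trace = (Hᵀ * (M * H)).trace := by
    conv_lhs => rw [← hMH]
    rw [Matrix.transpose_mul, hMsymm]
    have : Hᵀ * M * G * (M * H) = Hᵀ * ((M * G * M) * H) := by
      simp only [Matrix.mul_assoc]
    rw [this, hG]
  -- expression B : trace(Hᵀ(MH)) = ∑ wᵢ * ∑∑ X²
  have hB : (Hᵀ * (M * H)).trace = ∑ i, w i * ∑ r, ∑ c, X i r c ^ 2 := by
    rw [hMdef, Matrix.sum_mul, Matrix.mul_sum, Matrix.trace_sum]
    refine Finset.sum_congr rfl fun i _ => ?_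
    have h1 : Hᵀ * (w i • (A i * (A i)ᵀ) * H) = w i • ((X i)ᵀ * X i) := by
      rw [Matrix.smul_mul, Matrix.mul_smul, hXdef]
      simp only [Matrix.transpose_mul, Matrix.transpose_transpose, Matrix.mul_assoc]
    rw [h1, Matrix.trace_smul, aux_trace_transpose_mul]
    simp [sq]
  -- expression A : trace(Hᵀ(MH)) = ∑ trace(Xᵢᵀ Yᵢ)
  have hA : (Hᵀ * (M * H)).trace = ∑ i, ∑ r, ∑ c, X i r c * Y i r c := by
    rw [hMH, ← hAY, Matrix.mul_sum, Matrix.trace_sum]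
    refine Finset.sum_congr rfl fun i _ => ?_
    have h1 : Hᵀ * (A i * Y i) = (X i)ᵀ * Y i := by
      rw [hXdef]
      simp only [Matrix.transpose_mul, Matrix.transpose_transpose, Matrix.mul_assoc]
    rw [h1, aux_trace_transpose_mul]
  -- pointwise bound and conclusion
  set T : ℝ := (Hᵀ * (M * H)).trace with hTdef
  have hbound : 2 * T ≤ T + ∑ i, μ i := by
    calc 2 * T = ∑ i, 2 * ∑ r, ∑ c, X i r c * Y i r c := by
          rw [hA, Finset.mul_sum]
      _ ≤ ∑ i, (w i * (∑ r, ∑ c, X i r c ^ 2) + μ i) := by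
          refine Finset.sum_le_sum fun i _ => ?_
          refine aux_scalar _ _ _ _ _ ?_ (hw i) (hμ i) (aux_cs (X i) (Y i)) (hY i)
          positivity
      _ = T + ∑ i, μ i := by rw [Finset.sum_add_distrib, ← hB]
  rw [hKGK]
  linarith
end

section
/- Let A₁,…,A_s be real matrices with Aᵢ of size m × ℓᵢ, let w ∈ ℝ₊ˢ, let M(w) = Σᵢ wᵢAᵢAᵢᵀ, let K be an m × k matrix such that every column of K lies in the column space of M(w), and let G satisfy M(w)·G·M(w) = M(w). Then there exist matrices Yᵢ ∈ ℝ^{ℓᵢ×k} and scalars μᵢ ≥ 0 (i = 1,…,s) with Σᵢ AᵢYᵢ = K, ‖Yᵢ‖_F² ≤ wᵢμᵢ for all i, and Σᵢ μᵢ = trace(KᵀGK); that is, the minimum of Σᵢ μᵢ over this feasible set is attained and equals trace(KᵀM(w)⁻K). -/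
open Matrix

lemma trace_transpose_mul_self_eq {n p : ℕ} (B : Matrix (Fin n) (Fin p) ℝ) :
    (Bᵀ * B).trace = ∑ r, ∑ c, B r c ^ 2 := by
  simp only [Matrix.trace, Matrix.diag, Matrix.mul_apply, Matrix.transpose_apply, sq]
  rw [Finset.sum_comm]

lemma trace_transpose_mul_self_nonneg {n p : ℕ} (B : Matrix (Fin n) (Fin p) ℝ) :
    0 ≤ (Bᵀ * B).trace := by
  rw [trace_transpose_mul_self_eq]
  exact Finset.sum_nonneg fun r _ => Finset.sum_nonneg fun c _ => sq_nonneg _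

/-- Attainment in the SOCP characterization of `trace(KᵀM(w)⁻K)`: there is a feasible
point `(Yᵢ, μᵢ)` with `Σᵢ μᵢ = trace(KᵀGK)`, so the minimum of `Σᵢ μᵢ` equals
`trace(KᵀM(w)⁻K)`. -/
theorem stmt_12 (s m k : ℕ) (ℓ : Fin s → ℕ)
    (A : (i : Fin s) → Matrix (Fin m) (Fin (ℓ i)) ℝ)
    (w : Fin s → ℝ) (hw : ∀ i, 0 ≤ w i)
    (K : Matrix (Fin m) (Fin k) ℝ)
    (hest : ∀ j : Fin k, ∃ v : Fin m → ℝ,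
      (∑ i, w i • (A i * (A i)ᵀ)) *ᵥ v = fun r => K r j)
    (G : Matrix (Fin m) (Fin m) ℝ)
    (hG : (∑ i, w i • (A i * (A i)ᵀ)) * G * (∑ i, w i • (A i * (A i)ᵀ)) =
      ∑ i, w i • (A i * (A i)ᵀ)) :
    ∃ (Y : (i : Fin s) → Matrix (Fin (ℓ i)) (Fin k) ℝ) (μ : Fin s → ℝ),
      (∀ i, 0 ≤ μ i) ∧
      (∑ i, A i * Y i = K) ∧
      (∀ i : Fin s, (∑ r, ∑ c, Y i r c ^ 2) ≤ w i * μ i) ∧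
      (∑ i, μ i) = (Kᵀ * G * K).trace := by
  set M : Matrix (Fin m) (Fin m) ℝ := ∑ i, w i • (A i * (A i)ᵀ) with hMdef
  have hMsymm : Mᵀ = M := by
    rw [hMdef, transpose_sum]
    refine Finset.sum_congr rfl fun i _ => ?_
    rw [transpose_smul, transpose_mul, transpose_transpose]
  have hMGK : M * G * K = K := by
    ext r j
    obtain ⟨v, hv⟩ := hest j
    have h1 : (M * G * K) r j = ((M * G) *ᵥ fun l => K l j) r := by
      simp [Matrix.mul_apply, Matrix.mulVec, dotProduct]
    rw [h1, ← hv, mulVec_mulVec, hG, hv]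
  have hKGM : Kᵀ * Gᵀ * M = Kᵀ := by
    have := congrArg Matrix.transpose hMGK
    simpa [transpose_mul, hMsymm, Matrix.mul_assoc] using this
  refine ⟨fun i => w i • ((A i)ᵀ * G * K),
    fun i => w i * ((((A i)ᵀ * G * K)ᵀ * ((A i)ᵀ * G * K)).trace), ?_, ?_, ?_, ?_⟩
  · exact fun i => mul_nonneg (hw i) (trace_transpose_mul_self_nonneg _)
  · calc ∑ i, A i * (w i • ((A i)ᵀ * G * K))
        = (∑ i, w i • (A i * (A i)ᵀ)) * (G * K) := by
          rw [Matrix.sum_mul]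
          refine Finset.sum_congr rfl fun i _ => ?_
          rw [Matrix.mul_smul, Matrix.smul_mul, Matrix.mul_assoc, Matrix.mul_assoc]
      _ = K := by rw [← Matrix.mul_assoc]; exact hMGK
  · intro i
    set B := (A i)ᵀ * G * K with hB
    have heq : ∑ r, ∑ c, (w i • B) r c ^ 2 = w i * (w i * (Bᵀ * B).trace) := by
      rw [trace_transpose_mul_self_eq, Finset.mul_sum, Finset.mul_sum]
      refine Finset.sum_congr rfl fun r _ => ?_
      rw [Finset.mul_sum, Finset.mul_sum]
      refine Finset.sum_congr rfl fun c _ => ?_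
      simp only [Matrix.smul_apply, smul_eq_mul]
      ring
    rw [heq]
  · have hsum : ∑ i, w i • (((A i)ᵀ * G * K)ᵀ * ((A i)ᵀ * G * K))
        = Kᵀ * Gᵀ * M * G * K := by
      rw [hMdef, Matrix.mul_sum, Matrix.sum_mul, Matrix.sum_mul]
      refine Finset.sum_congr rfl fun i _ => ?_
      rw [transpose_mul, transpose_mul, transpose_transpose]
      simp only [Matrix.smul_mul, Matrix.mul_smul]
      congr 1
      simp only [Matrix.mul_assoc]
    calc ∑ i, w i * ((((A i)ᵀ * G * K)ᵀ * ((A i)ᵀ * G * K)).trace)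
        = (∑ i, w i • (((A i)ᵀ * G * K)ᵀ * ((A i)ᵀ * G * K))).trace := by
          rw [Matrix.trace_sum]
          exact Finset.sum_congr rfl fun i _ => by
            rw [Matrix.trace_smul, smul_eq_mul]
      _ = (Kᵀ * Gᵀ * M * G * K).trace := by rw [hsum]
      _ = (Kᵀ * G * K).trace := by rw [hKGM]
end

section
/- Let A₁,…,A_s be real matrices with Aᵢ of size m × ℓᵢ, let w ∈ ℝ₊ˢ, let M(w) = Σᵢ wᵢAᵢAᵢᵀ, and let K be an m × k matrix such that some column of K does NOT lie in the column space of M(w). Then there exist no matrices Yᵢ ∈ ℝ^{ℓᵢ×k} and scalars μᵢ ≥ 0 (i = 1,…,s) satisfying both Σᵢ AᵢYᵢ = K and ‖Yᵢ‖_F² ≤ wᵢμᵢ for all i; i.e., the feasible set of the SOCP for the A_K-criterion is empty in the non-estimable case. -/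
open Matrix

lemma range_self_mul_transpose_aux {m : ℕ} {n : Type*} [Fintype n]
    (B : Matrix (Fin m) n ℝ) :
    LinearMap.range (B * Bᵀ).mulVecLin = LinearMap.range B.mulVecLin := by
  apply Submodule.eq_of_le_of_finrank_eq
  · rw [Matrix.mulVecLin_mul]
    exact LinearMap.range_comp_le_range _ _
  · exact Matrix.rank_self_mul_transpose B


/-- Infeasibility of the SOCP for the `A_K`-criterion in the non-estimable case:
if some column of `K` does not lie in the column space of `M(w)`, then there are no
`(Yᵢ, μᵢ)` with `μᵢ ≥ 0`, `Σᵢ AᵢYᵢ = K` and `‖Yᵢ‖_F² ≤ wᵢμᵢ` for all `i`. -/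
theorem stmt_13 (s m k : ℕ) (ℓ : Fin s → ℕ)
    (A : (i : Fin s) → Matrix (Fin m) (Fin (ℓ i)) ℝ)
    (w : Fin s → ℝ) (hw : ∀ i, 0 ≤ w i)
    (K : Matrix (Fin m) (Fin k) ℝ)
    (hnonest : ∃ j : Fin k, ¬ ∃ v : Fin m → ℝ,
      (∑ i, w i • (A i * (A i)ᵀ)) *ᵥ v = fun r => K r j) :
    ¬ ∃ (Y : (i : Fin s) → Matrix (Fin (ℓ i)) (Fin k) ℝ) (μ : Fin s → ℝ),
      (∀ i, 0 ≤ μ i) ∧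
      (∑ i, A i * Y i = K) ∧
      (∀ i : Fin s, (∑ r, ∑ c, Y i r c ^ 2) ≤ w i * μ i) := by
  obtain ⟨j, hj⟩ := hnonest
  rintro ⟨Y, μ, hμ, hsum, hnorm⟩
  apply hj
  -- the block matrix
  set B : Matrix (Fin m) ((i : Fin s) × Fin (ℓ i)) ℝ :=
    fun r p => Real.sqrt (w p.1) * A p.1 r p.2 with hB
  have hM : (∑ i, w i • (A i * (A i)ᵀ)) = B * Bᵀ := by
    ext r r'
    simp only [Matrix.mul_apply, Matrix.transpose_apply]
    simp only [Matrix.sum_apply, Matrix.smul_apply, Matrix.mul_apply, Matrix.transpose_apply,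
      smul_eq_mul, hB]
    rw [← Finset.univ_sigma_univ, Finset.sum_sigma]
    refine Finset.sum_congr rfl fun i _ => ?_
    rw [Finset.mul_sum]
    refine Finset.sum_congr rfl fun c _ => ?_
    dsimp only
    have h : Real.sqrt (w i) * Real.sqrt (w i) = w i := Real.mul_self_sqrt (hw i)
    conv_lhs => rw [← h]
    ring
  -- Y i = 0 when w i = 0
  have hY0 : ∀ i, w i = 0 → Y i = 0 := by
    intro i hwi
    have h := hnorm i
    rw [hwi, zero_mul] at h
    ext r c
    have hnn : ∀ r' c', (0:ℝ) ≤ Y i r' c' ^ 2 := fun _ _ => sq_nonneg _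
    have : Y i r c ^ 2 = 0 := by
      have h1 : ∑ r', ∑ c', Y i r' c' ^ 2 = 0 :=
        le_antisymm h (Finset.sum_nonneg fun r' _ => Finset.sum_nonneg fun c' _ => hnn r' c')
      have h2 := Finset.sum_eq_zero_iff_of_nonneg
        (fun r' _ => Finset.sum_nonneg fun c' _ => hnn r' c') |>.mp h1 r (Finset.mem_univ r)
      exact (Finset.sum_eq_zero_iff_of_nonneg (fun c' _ => hnn r c')).mp h2 c (Finset.mem_univ c)
    simpa [pow_eq_zero_iff] using this
  -- the column of K is in the range of B
  have hmem : (fun r => K r j) ∈ LinearMap.range B.mulVecLin := by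
    refine ⟨fun p => if 0 < w p.1 then Y p.1 p.2 j / Real.sqrt (w p.1) else 0, ?_⟩
    funext r
    rw [Matrix.mulVecLin_apply]
    show ∑ p, B r p * _ = K r j
    rw [← Finset.univ_sigma_univ, Finset.sum_sigma]
    have : ∀ i : Fin s, (∑ c, B r ⟨i, c⟩ *
        (if 0 < w i then Y i c j / Real.sqrt (w i) else 0)) = (A i * Y i) r j := by
      intro i
      rcases lt_or_eq_of_le (hw i) with hpos | hzero
      · simp only [if_pos hpos, hB, Matrix.mul_apply]
        refine Finset.sum_congr rfl fun c _ => ?_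
        have hs : Real.sqrt (w i) ≠ 0 := by positivity
        field_simp
      · simp [hB, ← hzero, hY0 i hzero.symm, Matrix.mul_apply]
    rw [Finset.sum_congr rfl fun i _ => this i]
    rw [← Matrix.sum_apply, hsum]
  rw [hM]
  rw [← range_self_mul_transpose_aux B] at hmem
  obtain ⟨v, hv⟩ := hmem
  exact ⟨v, hv⟩
end
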